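/- arXiv:2001.00852 — 6 statements merged into one kernel-verified Lean document; each statement's English description precedes it below -/
import Mathlib

section
/- For all real numbers x > 0 and y > 0, one has (x - y) * log(x/y) >= 4 * (sqrt(x) - sqrt(y))^2. -/
open Real

lemma key_log_lb (s : ℝ) (hs : 1 ≤ s) : 2 - 4 / (s + 1) ≤ Real.log s := by
  set f : ℝ → ℝ := fun t => Real.log t + 4 / (t + 1) with hf
  have hderiv : ∀ t : ℝ, 1 ≤ t → HasDerivAt f (t⁻¹ - 4 / (t + 1) ^ 2) t := by
    intro t ht
    have ht0 : t ≠ 0 := by linarith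
    have ht1 : t + 1 ≠ 0 := by linarith
    have h1 : HasDerivAt Real.log t⁻¹ t := Real.hasDerivAt_log ht0
    have h2 : HasDerivAt (fun y : ℝ => y + 1) 1 t := (hasDerivAt_id t).add_const 1
    have h3 : HasDerivAt (fun y : ℝ => (y + 1)⁻¹) (-1 / (t + 1) ^ 2) t := h2.inv ht1
    have h4 : HasDerivAt (fun y : ℝ => 4 * (y + 1)⁻¹) (4 * (-1 / (t + 1) ^ 2)) t :=
      h3.const_mul 4
    have h5 : HasDerivAt f (t⁻¹ + 4 * (-1 / (t + 1) ^ 2)) t := by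
      simpa [hf, div_eq_mul_inv, Pi.add_def] using h1.add h4
    convert h5 using 1
    field_simp
    ring
  have hmono : MonotoneOn f (Set.Ici 1) := by
    apply monotoneOn_of_deriv_nonneg (convex_Ici 1)
    · intro t ht
      exact ((hderiv t ht).continuousAt).continuousWithinAt
    · intro t ht
      rw [interior_Ici] at ht
      exact (hderiv t (le_of_lt ht)).differentiableAt.differentiableWithinAt
    · intro t ht
      rw [interior_Ici] at ht
      have ht' : (1 : ℝ) < t := ht
      rw [(hderiv t ht'.le).deriv]
      have h1 : 0 < t := by linarith
      have h2 : (0 : ℝ) < (t + 1) ^ 2 := by positivity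
      rw [sub_nonneg, div_le_iff₀ h2, inv_mul_eq_div, le_div_iff₀ h1]
      nlinarith [sq_nonneg (t - 1)]
  have h1 : f 1 ≤ f s := hmono (by simp) hs hs
  have hval : f 1 = 2 := by norm_num [hf]
  have : f s = Real.log s + 4 / (s + 1) := rfl
  rw [this] at h1
  rw [hval] at h1
  linarith

lemma aux_sq (a b : ℝ) (hb : 0 < b) (hab : b ≤ a) :
    (a ^ 2 - b ^ 2) * Real.log (a ^ 2 / b ^ 2) ≥ 4 * (a - b) ^ 2 := by
  have ha : 0 < a := lt_of_lt_of_le hb hab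
  have hs : 1 ≤ a / b := (one_le_div hb).mpr hab
  have hlog : 2 - 4 / (a / b + 1) ≤ Real.log (a / b) := key_log_lb _ hs
  have hrw : Real.log (a ^ 2 / b ^ 2) = 2 * Real.log (a / b) := by
    rw [← div_pow, Real.log_pow]
    push_cast
    ring
  have hab2 : 0 ≤ a ^ 2 - b ^ 2 := by nlinarith
  have heq : 2 - 4 / (a / b + 1) = 2 * (a - b) / (a + b) := by
    have h1 : a + b ≠ 0 := by positivity
    field_simp
    ring
  rw [hrw]
  have h2 : Real.log (a / b) ≥ 2 * (a - b) / (a + b) := by rw [← heq]; exact hlog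
  have h3 : (a ^ 2 - b ^ 2) * (2 * Real.log (a / b)) ≥
      (a ^ 2 - b ^ 2) * (2 * (2 * (a - b) / (a + b))) := by
    apply mul_le_mul_of_nonneg_left _ hab2
    linarith
  refine le_trans (le_of_eq ?_) h3
  have h4 : a + b ≠ 0 := by positivity
  field_simp
  ring

/-- For all positive reals `x, y`, one has `(x - y) * log (x / y) ≥ 4 * (√x - √y)^2`. -/
theorem sub_mul_log_div_ge_four_sq_sqrt_sub (x y : ℝ) (hx : 0 < x) (hy : 0 < y) :
    (x - y) * Real.log (x / y) ≥ 4 * (Real.sqrt x - Real.sqrt y) ^ 2 := by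
  rcases le_total y x with h | h
  · have hxa : Real.sqrt x ^ 2 = x := Real.sq_sqrt hx.le
    have hya : Real.sqrt y ^ 2 = y := Real.sq_sqrt hy.le
    have hab : Real.sqrt y ≤ Real.sqrt x := Real.sqrt_le_sqrt h
    have := aux_sq (Real.sqrt x) (Real.sqrt y) (Real.sqrt_pos.mpr hy) hab
    rwa [hxa, hya] at this
  · have hxa : Real.sqrt x ^ 2 = x := Real.sq_sqrt hx.le
    have hya : Real.sqrt y ^ 2 = y := Real.sq_sqrt hy.le
    have hab : Real.sqrt x ≤ Real.sqrt y := Real.sqrt_le_sqrt h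
    have h1 := aux_sq (Real.sqrt y) (Real.sqrt x) (Real.sqrt_pos.mpr hx) hab
    rw [hxa, hya] at h1
    have h2 : Real.log (x / y) = - Real.log (y / x) := by
      rw [← Real.log_inv, inv_div]
    rw [h2]
    have h3 : (Real.sqrt x - Real.sqrt y) ^ 2 = (Real.sqrt y - Real.sqrt x) ^ 2 := by ring
    rw [h3]
    nlinarith [h1]
end

section
/- There exists a constant C > 0 such that for all real numbers x > 0 and y > 0 with x ≠ y, x * log(x/y) - x + y <= C * max(1, log(x/y)) * (sqrt(x) - sqrt(y))^2. -/
lemma entropy_key_lemma (t : ℝ) (ht : 0 < t) :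
    t * Real.log t - t + 1 ≤ 9 * max 1 (Real.log t) * (Real.sqrt t - 1) ^ 2 := by
  have hs : Real.sqrt t ^ 2 = t := Real.sq_sqrt ht.le
  have hs0 : 0 < Real.sqrt t := Real.sqrt_pos.mpr ht
  have hlog : Real.log t ≤ t - 1 := Real.log_le_sub_one_of_pos ht
  have hmax1 : (1:ℝ) ≤ max 1 (Real.log t) := le_max_left _ _
  rcases le_or_gt t 4 with h4 | h4
  · have h1 : t * Real.log t ≤ t * (t - 1) := mul_le_mul_of_nonneg_left hlog ht.le
    have hsle : Real.sqrt t ≤ 2 := by nlinarith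
    nlinarith [sq_nonneg (Real.sqrt t - 1), sq_nonneg (Real.sqrt t + 1),
      mul_nonneg (sub_nonneg.mpr hmax1) (sq_nonneg (Real.sqrt t - 1)),
      mul_nonneg (sq_nonneg (Real.sqrt t - 1)) (mul_nonneg (sub_nonneg.mpr hsle) hs0.le)]
  · have hlogmax : Real.log t ≤ max 1 (Real.log t) := le_max_right _ _
    have hlognn : 0 ≤ Real.log t := Real.log_nonneg (by linarith)
    have h2 : t * Real.log t - t + 1 ≤ (t - 1) * Real.log t := by nlinarith
    have hsge : 2 ≤ Real.sqrt t := by nlinarith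
    have h3 : t - 1 ≤ 3 * (Real.sqrt t - 1) ^ 2 := by nlinarith
    have h5 : (t - 1) * Real.log t ≤ 3 * (Real.sqrt t - 1) ^ 2 * Real.log t :=
      mul_le_mul_of_nonneg_right h3 hlognn
    have h6 : 3 * (Real.sqrt t - 1) ^ 2 * Real.log t
        ≤ 9 * max 1 (Real.log t) * (Real.sqrt t - 1) ^ 2 := by
      nlinarith [sq_nonneg (Real.sqrt t - 1),
        mul_nonneg (sq_nonneg (Real.sqrt t - 1)) (sub_nonneg.mpr hlogmax),
        mul_nonneg (sq_nonneg (Real.sqrt t - 1)) (le_trans zero_le_one hmax1)]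
    linarith

/-- There is a constant `C > 0` such that for all positive reals `x ≠ y`,
`x * log (x / y) - x + y ≤ C * max 1 (log (x / y)) * (√x - √y)^2`. -/
theorem entropy_integrand_bound :
    ∃ C : ℝ, 0 < C ∧ ∀ x y : ℝ, 0 < x → 0 < y → x ≠ y →
      x * Real.log (x / y) - x + y ≤
        C * max 1 (Real.log (x / y)) * (Real.sqrt x - Real.sqrt y) ^ 2 := by
  refine ⟨9, by norm_num, fun x y hx hy _ => ?_⟩
  have ht : 0 < x / y := div_pos hx hy
  have key := entropy_key_lemma (x / y) ht
  have hsx : Real.sqrt x = Real.sqrt y * Real.sqrt (x / y) := by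
    rw [← Real.sqrt_mul hy.le]
    congr 1
    field_simp
  have hsq : (Real.sqrt x - Real.sqrt y) ^ 2 = y * (Real.sqrt (x / y) - 1) ^ 2 := by
    rw [hsx, show Real.sqrt y * Real.sqrt (x / y) - Real.sqrt y
        = Real.sqrt y * (Real.sqrt (x / y) - 1) by ring, mul_pow, Real.sq_sqrt hy.le]
  have hxval : y * (x / y) = x := by field_simp
  have := mul_le_mul_of_nonneg_left key hy.le
  calc x * Real.log (x / y) - x + y
      = y * ((x / y) * Real.log (x / y) - (x / y) + 1) := by
        field_simp
    _ ≤ y * (9 * max 1 (Real.log (x / y)) * (Real.sqrt (x / y) - 1) ^ 2) := this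
    _ = 9 * max 1 (Real.log (x / y)) * (Real.sqrt x - Real.sqrt y) ^ 2 := by
        rw [hsq]; ring
end

section
/- Let N >= 3, let Omega ⊂ R^N be a nonempty bounded open set, let d1, d2, d3 > 0 and M13, M23, M14 > 0, and assume there is a constant C_Omega > 0 such that for every continuously differentiable function f : R^N → R one has ||∇f||_{L^2(Omega)} >= C_Omega * ||f - f̄||_{L^{2N/(N-2)}(Omega)}, where f̄ = (1/|Omega|)∫_Omega f dx. Then there exists a constant K2 > 0, depending only on Omega, C_Omega, d1, d2, d3, M13, M23, M14, such that: for all bounded nonnegative measurable functions u1, u2, u3, u4 on Omega with U_i := sqrt(u_i) continuously differentiable for i = 1, 2, 3, satisfying the mass constraints ∫_Omega (u_i + u_j) dx = M_{ij} for (i,j) in {(1,3),(2,3),(1,4)}, one has D~(U) >= K2 / (1 + max( ||u1||_{L^{N/2}(Omega)}, ||u4||_{L^{N/2}(Omega)} )) * ||U4 - Ū4||_{L^2(Omega)}^2. -/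
open MeasureTheory Real Filter
open scoped ENNReal

section Helpers

variable {X : Type*} [MeasurableSpace X] {μ : Measure X} [IsFiniteMeasure μ]

lemma memLp_of_bdd {f : X → ℝ} (hf : AEStronglyMeasurable f μ) (C : ℝ)
    (hb : ∀ᵐ x ∂μ, |f x| ≤ C) (p : ℝ≥0∞) : MemLp f p μ :=
  (memLp_top_of_bound hf C (by simpa [Real.norm_eq_abs] using hb)).mono_exponent le_top

lemma integrable_of_bdd {f : X → ℝ} (hf : AEStronglyMeasurable f μ) (C : ℝ)
    (hb : ∀ᵐ x ∂μ, |f x| ≤ C) : Integrable f μ :=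
  memLp_one_iff_integrable.mp (memLp_of_bdd hf C hb 1)

lemma holder_sq_mul {h w : X → ℝ} {p q : ℝ} (hpq : p.HolderConjugate q)
    (hwn : 0 ≤ᵐ[μ] w)
    (hf : MemLp (fun x => (h x)^2) (ENNReal.ofReal p) μ)
    (hg : MemLp w (ENNReal.ofReal q) μ) :
    ∫ x, (h x)^2 * w x ∂μ
      ≤ (∫ x, |h x| ^ (2*p) ∂μ) ^ (1/p) * (∫ x, w x ^ q ∂μ) ^ (1/q) := by
  have h1 : ∫ x, (h x)^2 * w x ∂μ
      ≤ (∫ x, ((h x)^2) ^ p ∂μ) ^ (1/p) * (∫ x, w x ^ q ∂μ) ^ (1/q) :=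
    integral_mul_le_Lp_mul_Lq_of_nonneg hpq (Eventually.of_forall fun x => sq_nonneg _) hwn hf hg
  have h2 : (∫ x, ((h x)^2) ^ p ∂μ) = ∫ x, |h x| ^ (2*p) ∂μ := by
    refine integral_congr_ae (Eventually.of_forall fun x => ?_)
    dsimp only
    rw [← sq_abs, ← Real.rpow_natCast |h x| 2, ← Real.rpow_mul (abs_nonneg _)]
    norm_num
  rw [h2] at h1
  exact h1

lemma integral_mul_le_sqrt {f g : X → ℝ} (hfn : 0 ≤ᵐ[μ] f) (hgn : 0 ≤ᵐ[μ] g)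
    (hf : MemLp f (ENNReal.ofReal 2) μ) (hg : MemLp g (ENNReal.ofReal 2) μ) :
    ∫ x, f x * g x ∂μ ≤ Real.sqrt (∫ x, (f x)^2 ∂μ) * Real.sqrt (∫ x, (g x)^2 ∂μ) := by
  have hpq : Real.HolderConjugate 2 2 := Real.HolderConjugate.two_two
  have h1 := integral_mul_le_Lp_mul_Lq_of_nonneg hpq hfn hgn hf hg
  have e1 : ∀ (u : X → ℝ), (∫ x, u x ^ (2:ℝ) ∂μ) = ∫ x, (u x)^2 ∂μ := by
    intro u
    refine integral_congr_ae (Eventually.of_forall fun x => ?_)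
    dsimp only
    rw [show (2:ℝ) = ((2:ℕ):ℝ) by norm_num, Real.rpow_natCast]
  rw [e1, e1] at h1
  calc ∫ x, f x * g x ∂μ
      ≤ (∫ x, (f x)^2 ∂μ) ^ ((1:ℝ)/2) * (∫ x, (g x)^2 ∂μ) ^ ((1:ℝ)/2) := h1
    _ = _ := by rw [← Real.sqrt_eq_rpow, ← Real.sqrt_eq_rpow]

lemma integral_sub_const_sq {f : X → ℝ} (hf : Integrable f μ)
    (hf2 : Integrable (fun x => (f x)^2) μ) (c : ℝ) :
    ∫ x, (f x - c)^2 ∂μ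
      = ∫ x, (f x)^2 ∂μ - 2*c*∫ x, f x ∂μ + c^2*(μ Set.univ).toReal := by
  have e : (fun x => (f x - c)^2) = fun x => ((f x)^2 - (2*c)*f x) + c^2 := by
    funext x; ring
  have h1 : Integrable (fun x => (2*c)*f x) μ := hf.const_mul _
  have hA : Integrable (fun x => (f x)^2 - (2*c)*f x) μ := hf2.sub h1
  rw [e, integral_add hA (integrable_const _),
    integral_sub hf2 h1, integral_const_mul, integral_const, smul_eq_mul, measureReal_def]
  ring

lemma integral_mul_expand {f g : X → ℝ} (hf : Integrable f μ) (hg : Integrable g μ)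
    (hfg : Integrable (fun x => f x * g x) μ) (a b : ℝ) :
    ∫ x, (f x - a) * (g x - b) ∂μ
      = ∫ x, f x * g x ∂μ - b * ∫ x, f x ∂μ - a * ∫ x, g x ∂μ
        + a*b*(μ Set.univ).toReal := by
  have e : (fun x => (f x - a)*(g x - b))
      = fun x => ((f x * g x - b * f x) - a * g x) + a*b := by
    funext x; ring
  have h1 : Integrable (fun x => b*f x) μ := hf.const_mul _
  have h2 : Integrable (fun x => a*g x) μ := hg.const_mul _
  have hA : Integrable (fun x => f x * g x - b*f x) μ := hfg.sub h1
  have hB : Integrable (fun x => (f x * g x - b*f x) - a*g x) μ := hA.sub h2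
  rw [e, integral_add hB (integrable_const _), integral_sub hA h2,
    integral_sub hfg h1, integral_const_mul, integral_const_mul, integral_const, smul_eq_mul, measureReal_def]
  ring

end Helpers

set_option maxHeartbeats 2000000 in
/-- Indirect diffusion effect in dimensions `N ≥ 3`: assuming a Poincaré–Wirtinger–Sobolev
inequality on `Ω`, there is `K2 > 0` depending only on `Ω, C_Ω, d₁, d₂, d₃, M₁₃, M₂₃, M₁₄`
such that
`D~(U) ≥ K2 / (1 + max(‖u₁‖_{L^{N/2}}, ‖u₄‖_{L^{N/2}})) * ‖U₄ - U̅₄‖_{L²(Ω)}²`. -/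
theorem indirect_diffusion_effect_dim_ge_three
    (N : ℕ) (hN : 3 ≤ N) (Ω : Set (EuclideanSpace ℝ (Fin N)))
    (hΩne : Ω.Nonempty) (hΩopen : IsOpen Ω) (hΩbd : Bornology.IsBounded Ω)
    (d1 d2 d3 M13 M23 M14 : ℝ)
    (hd1 : 0 < d1) (hd2 : 0 < d2) (hd3 : 0 < d3)
    (hM13 : 0 < M13) (hM23 : 0 < M23) (hM14 : 0 < M14)
    (CΩ : ℝ) (hCΩ : 0 < CΩ)
    -- Poincaré–Wirtinger–Sobolev inequality on Ω
    (hPW : ∀ f : EuclideanSpace ℝ (Fin N) → ℝ, ContDiff ℝ 1 f →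
      CΩ * (∫ x in Ω, |f x - ⨍ y in Ω, f y| ^ ((2 * (N : ℝ)) / ((N : ℝ) - 2)))
          ^ (((N : ℝ) - 2) / (2 * (N : ℝ)))
        ≤ (∫ x in Ω, ‖fderiv ℝ f x‖ ^ 2) ^ ((1 : ℝ) / 2)) :
    ∃ K2 : ℝ, 0 < K2 ∧
      ∀ u1 u2 u3 u4 : EuclideanSpace ℝ (Fin N) → ℝ,
        Measurable u1 → Measurable u2 → Measurable u3 → Measurable u4 →
        (∀ x ∈ Ω, 0 ≤ u1 x) → (∀ x ∈ Ω, 0 ≤ u2 x) →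
        (∀ x ∈ Ω, 0 ≤ u3 x) → (∀ x ∈ Ω, 0 ≤ u4 x) →
        (∃ B : ℝ, ∀ x ∈ Ω, u1 x ≤ B) → (∃ B : ℝ, ∀ x ∈ Ω, u2 x ≤ B) →
        (∃ B : ℝ, ∀ x ∈ Ω, u3 x ≤ B) → (∃ B : ℝ, ∀ x ∈ Ω, u4 x ≤ B) →
        ContDiff ℝ 1 (fun x => Real.sqrt (u1 x)) →
        ContDiff ℝ 1 (fun x => Real.sqrt (u2 x)) →
        ContDiff ℝ 1 (fun x => Real.sqrt (u3 x)) →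
        (∫ x in Ω, (u1 x + u3 x)) = M13 →
        (∫ x in Ω, (u2 x + u3 x)) = M23 →
        (∫ x in Ω, (u1 x + u4 x)) = M14 →
        4 * (d1 * ∫ x in Ω, ‖fderiv ℝ (fun y => Real.sqrt (u1 y)) x‖ ^ 2
          + d2 * ∫ x in Ω, ‖fderiv ℝ (fun y => Real.sqrt (u2 y)) x‖ ^ 2
          + d3 * ∫ x in Ω, ‖fderiv ℝ (fun y => Real.sqrt (u3 y)) x‖ ^ 2
          + ∫ x in Ω, (Real.sqrt (u1 x) * Real.sqrt (u2 x)
              - Real.sqrt (u3 x) * Real.sqrt (u4 x)) ^ 2)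
        ≥ K2 / (1 + max
              ((∫ x in Ω, |u1 x| ^ ((N : ℝ) / 2)) ^ (2 / (N : ℝ)))
              ((∫ x in Ω, |u4 x| ^ ((N : ℝ) / 2)) ^ (2 / (N : ℝ))))
          * ∫ x in Ω, (Real.sqrt (u4 x) - ⨍ y in Ω, Real.sqrt (u4 y)) ^ 2 := by
  have hΩm : MeasurableSet Ω := hΩopen.measurableSet
  have hvol0 : volume Ω ≠ 0 := (hΩopen.measure_pos volume hΩne).ne'
  have hvolfin : volume Ω ≠ ⊤ := hΩbd.measure_lt_top.ne
  haveI hfin : IsFiniteMeasure (volume.restrict Ω) :=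
    ⟨by rw [Measure.restrict_apply_univ]; exact hΩbd.measure_lt_top⟩
  set V : ℝ := (volume Ω).toReal with hVdef
  have hV : 0 < V := ENNReal.toReal_pos hvol0 hvolfin
  have hN3 : (3:ℝ) ≤ (N:ℝ) := by exact_mod_cast hN
  have hN0 : (0:ℝ) < (N:ℝ) := by linarith
  have hN2 : (0:ℝ) < (N:ℝ) - 2 := by linarith
  have hCΩ2 : (0:ℝ) < CΩ^2 := pow_pos hCΩ 2
  set q : ℝ := (N:ℝ)/2 with hqdef
  set p : ℝ := (N:ℝ)/((N:ℝ)-2) with hpdef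
  have hpq : p.HolderConjugate q := by
    rw [Real.holderConjugate_iff]
    constructor
    · rw [hpdef, lt_div_iff₀ hN2]; linarith
    · rw [hpdef, hqdef, inv_div, inv_div]; field_simp; ring
  have h1q : 1/q = 2/(N:ℝ) := by rw [hqdef, one_div_div]
  have h1p : 1/p = ((N:ℝ)-2)/(N:ℝ) := by rw [hpdef, one_div_div]
  have h2p : 2*p = 2*(N:ℝ)/((N:ℝ)-2) := by rw [hpdef]; ring
  -- effective diffusion coefficients after flattening the nested integrals
  set e2 : ℝ := V*d1*d2 with he2def
  set e3 : ℝ := V^2*d1*d2*d3 with he3def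
  set e4 : ℝ := V^3*d1*d2*d3 with he4def
  have he2 : 0 < e2 := mul_pos (mul_pos hV hd1) hd2
  have he3 : 0 < e3 := mul_pos (mul_pos (mul_pos (pow_pos hV 2) hd1) hd2) hd3
  have he4 : 0 < e4 := mul_pos (mul_pos (mul_pos (pow_pos hV 3) hd1) hd2) hd3
  set E : ℝ := V ^ ((2:ℝ)/(N:ℝ)) / CΩ^2 with hEdef
  have hE : 0 < E := div_pos (Real.rpow_pos_of_pos hV _) hCΩ2
  set β : ℝ := Real.sqrt (M13*M23) / 4 with hβdef
  have hβ : 0 < β := by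
    have : 0 < Real.sqrt (M13*M23) := Real.sqrt_pos.2 (by positivity)
    rw [hβdef]; linarith
  set ε₀ : ℝ := min (M13/4) (min (M23/4) (β^2/(16*M14))) with hεdef
  have hε : 0 < ε₀ :=
    lt_min (by linarith) (lt_min (by linarith) (div_pos (pow_pos hβ 2) (by linarith)))
  set g₀ : ℝ := min (ε₀*e3/(2*E)) (min (M13*d1/(4*E)) (min (M23*e2/(4*E))
      (min (β*d1/E) (min (β*e2/E) (β^2*e4/(16*V)))))) with hg₀def
  have hg₀ : 0 < g₀ := by
    have h2E : (0:ℝ) < 2*E := by linarith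
    have h4E : (0:ℝ) < 4*E := by linarith
    exact lt_min (div_pos (mul_pos hε he3) h2E)
      (lt_min (div_pos (mul_pos hM13 hd1) h4E)
      (lt_min (div_pos (mul_pos hM23 he2) h4E)
      (lt_min (div_pos (mul_pos hβ hd1) hE)
      (lt_min (div_pos (mul_pos hβ he2) hE)
        (div_pos (mul_pos (pow_pos hβ 2) he4) (by linarith))))))
  set C₂ : ℝ := 1/(CΩ^2*e3) + 1/(CΩ^2*e2) + M23*E/(V*d1) + 1/e4 with hC₂def
  have hC₂ : 0 < C₂ := by
    have t1 : (0:ℝ) < 1/(CΩ^2*e3) := div_pos one_pos (mul_pos hCΩ2 he3)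
    have t2 : (0:ℝ) < 1/(CΩ^2*e2) := div_pos one_pos (mul_pos hCΩ2 he2)
    have t3 : (0:ℝ) < M23*E/(V*d1) := div_pos (mul_pos hM23 hE) (mul_pos hV hd1)
    have t4 : (0:ℝ) < 1/e4 := div_pos one_pos he4
    rw [hC₂def]; linarith
  set K2v : ℝ := min (ε₀/(2*V*C₂)) (4*g₀/M14) with hK2def
  have hK2pos : 0 < K2v :=
    lt_min (div_pos hε (by nlinarith only [hV, hC₂]))
      (div_pos (by linarith : (0:ℝ) < 4*g₀) hM14)
  refine ⟨K2v, hK2pos, ?_⟩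
  intro u1 u2 u3 u4 hmu1 hmu2 hmu3 hmu4 hnn1 hnn2 hnn3 hnn4 hbd1 hbd2 hbd3 hbd4
    hsm1 hsm2 hsm3 hmass13 hmass23 hmass14
  obtain ⟨B1, hB1⟩ := hbd1
  obtain ⟨B2, hB2⟩ := hbd2
  obtain ⟨B3, hB3⟩ := hbd3
  obtain ⟨B4, hB4⟩ := hbd4
  -- abbreviations appearing in the goal
  set I1 : ℝ := ∫ x in Ω, ‖fderiv ℝ (fun y => Real.sqrt (u1 y)) x‖ ^ 2 with hI1def
  set I2 : ℝ := ∫ x in Ω, ‖fderiv ℝ (fun y => Real.sqrt (u2 y)) x‖ ^ 2 with hI2def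
  set I3 : ℝ := ∫ x in Ω, ‖fderiv ℝ (fun y => Real.sqrt (u3 y)) x‖ ^ 2 with hI3def
  set Iδ : ℝ := ∫ x in Ω, (Real.sqrt (u1 x) * Real.sqrt (u2 x)
      - Real.sqrt (u3 x) * Real.sqrt (u4 x)) ^ 2 with hIδdef
  set mx1 : ℝ := (∫ x in Ω, |u1 x| ^ q) ^ (2/(N:ℝ)) with hmx1def
  set mx4 : ℝ := (∫ x in Ω, |u4 x| ^ q) ^ (2/(N:ℝ)) with hmx4def
  set m4 : ℝ := ⨍ y in Ω, Real.sqrt (u4 y) with hm4def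
  set Var : ℝ := ∫ x in Ω, (Real.sqrt (u4 x) - m4) ^ 2 with hVardef
  set m1 : ℝ := ⨍ y in Ω, Real.sqrt (u1 y) with hm1def
  set m2 : ℝ := ⨍ y in Ω, Real.sqrt (u2 y) with hm2def
  set m3 : ℝ := ⨍ y in Ω, Real.sqrt (u3 y) with hm3def
  -- infrastructure
  have haeΩ : ∀ᵐ x ∂(volume.restrict Ω), x ∈ Ω := ae_restrict_mem hΩm
  have intB : ∀ f : EuclideanSpace ℝ (Fin N) → ℝ, Measurable f →
      (∃ C, ∀ x ∈ Ω, |f x| ≤ C) → Integrable f (volume.restrict Ω) := by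
    rintro f hf ⟨C, hC⟩
    exact integrable_of_bdd hf.aestronglyMeasurable C
      (by filter_upwards [haeΩ] with x hx using hC x hx)
  have memB : ∀ f : EuclideanSpace ℝ (Fin N) → ℝ, Measurable f →
      (∃ C, ∀ x ∈ Ω, |f x| ≤ C) → ∀ pp : ℝ≥0∞, MemLp f pp (volume.restrict Ω) := by
    rintro f hf ⟨C, hC⟩ pp
    exact memLp_of_bdd hf.aestronglyMeasurable C
      (by filter_upwards [haeΩ] with x hx using hC x hx) pp
  have congΩ : ∀ f g : EuclideanSpace ℝ (Fin N) → ℝ, (∀ x ∈ Ω, f x = g x) →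
      ∫ x in Ω, f x = ∫ x in Ω, g x := by
    intro f g h
    exact integral_congr_ae (by filter_upwards [haeΩ] with x hx using h x hx)
  have bddMul : ∀ {f g : EuclideanSpace ℝ (Fin N) → ℝ}, (∃ C, ∀ x ∈ Ω, |f x| ≤ C) →
      (∃ C, ∀ x ∈ Ω, |g x| ≤ C) → ∃ C, ∀ x ∈ Ω, |f x * g x| ≤ C := by
    rintro f g ⟨Cf, hCf⟩ ⟨Cg, hCg⟩
    refine ⟨abs Cf * abs Cg, fun x hx => ?_⟩
    rw [abs_mul]
    exact mul_le_mul ((hCf x hx).trans (le_abs_self _)) ((hCg x hx).trans (le_abs_self _))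
      (abs_nonneg _) (abs_nonneg _)
  have bddSubC : ∀ {f : EuclideanSpace ℝ (Fin N) → ℝ} (c : ℝ), (∃ C, ∀ x ∈ Ω, |f x| ≤ C) →
      ∃ C, ∀ x ∈ Ω, |f x - c| ≤ C := by
    rintro f c ⟨Cf, hCf⟩
    refine ⟨Cf + |c|, fun x hx => ?_⟩
    rw [sub_eq_add_neg]
    exact (abs_add_le _ _).trans (by rw [abs_neg]; exact add_le_add (hCf x hx) le_rfl)
  have bddSub2 : ∀ {f g : EuclideanSpace ℝ (Fin N) → ℝ}, (∃ C, ∀ x ∈ Ω, |f x| ≤ C) →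
      (∃ C, ∀ x ∈ Ω, |g x| ≤ C) → ∃ C, ∀ x ∈ Ω, |f x - g x| ≤ C := by
    rintro f g ⟨Cf, hCf⟩ ⟨Cg, hCg⟩
    refine ⟨Cf + Cg, fun x hx => ?_⟩
    rw [sub_eq_add_neg]
    exact (abs_add_le _ _).trans (by rw [abs_neg]; exact add_le_add (hCf x hx) (hCg x hx))
  have bddSq : ∀ {f : EuclideanSpace ℝ (Fin N) → ℝ}, (∃ C, ∀ x ∈ Ω, |f x| ≤ C) →
      ∃ C, ∀ x ∈ Ω, |f x ^ 2| ≤ C := by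
    rintro f ⟨Cf, hCf⟩
    refine ⟨Cf^2, fun x hx => ?_⟩
    rw [abs_pow]
    exact pow_le_pow_left₀ (abs_nonneg _) (hCf x hx) 2
  have bddAbs : ∀ {f : EuclideanSpace ℝ (Fin N) → ℝ}, (∃ C, ∀ x ∈ Ω, |f x| ≤ C) →
      ∃ C, ∀ x ∈ Ω, |(|f x|)| ≤ C := by
    rintro f ⟨Cf, hCf⟩
    exact ⟨Cf, fun x hx => by rw [abs_abs]; exact hCf x hx⟩
  -- basic bounds, measurability, integrability
  have bu1 : ∃ C, ∀ x ∈ Ω, |u1 x| ≤ C := ⟨|B1|, fun x hx => by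
    rw [abs_of_nonneg (hnn1 x hx)]; exact (hB1 x hx).trans (le_abs_self _)⟩
  have bu2 : ∃ C, ∀ x ∈ Ω, |u2 x| ≤ C := ⟨|B2|, fun x hx => by
    rw [abs_of_nonneg (hnn2 x hx)]; exact (hB2 x hx).trans (le_abs_self _)⟩
  have bu3 : ∃ C, ∀ x ∈ Ω, |u3 x| ≤ C := ⟨|B3|, fun x hx => by
    rw [abs_of_nonneg (hnn3 x hx)]; exact (hB3 x hx).trans (le_abs_self _)⟩
  have bu4 : ∃ C, ∀ x ∈ Ω, |u4 x| ≤ C := ⟨|B4|, fun x hx => by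
    rw [abs_of_nonneg (hnn4 x hx)]; exact (hB4 x hx).trans (le_abs_self _)⟩
  have bU1 : ∃ C, ∀ x ∈ Ω, |Real.sqrt (u1 x)| ≤ C := ⟨Real.sqrt |B1|, fun x hx => by
    rw [abs_of_nonneg (Real.sqrt_nonneg _)]
    exact Real.sqrt_le_sqrt ((hB1 x hx).trans (le_abs_self _))⟩
  have bU2 : ∃ C, ∀ x ∈ Ω, |Real.sqrt (u2 x)| ≤ C := ⟨Real.sqrt |B2|, fun x hx => by
    rw [abs_of_nonneg (Real.sqrt_nonneg _)]
    exact Real.sqrt_le_sqrt ((hB2 x hx).trans (le_abs_self _))⟩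
  have bU3 : ∃ C, ∀ x ∈ Ω, |Real.sqrt (u3 x)| ≤ C := ⟨Real.sqrt |B3|, fun x hx => by
    rw [abs_of_nonneg (Real.sqrt_nonneg _)]
    exact Real.sqrt_le_sqrt ((hB3 x hx).trans (le_abs_self _))⟩
  have bU4 : ∃ C, ∀ x ∈ Ω, |Real.sqrt (u4 x)| ≤ C := ⟨Real.sqrt |B4|, fun x hx => by
    rw [abs_of_nonneg (Real.sqrt_nonneg _)]
    exact Real.sqrt_le_sqrt ((hB4 x hx).trans (le_abs_self _))⟩
  have mU1 : Measurable fun x => Real.sqrt (u1 x) := Real.continuous_sqrt.measurable.comp hmu1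
  have mU2 : Measurable fun x => Real.sqrt (u2 x) := Real.continuous_sqrt.measurable.comp hmu2
  have mU3 : Measurable fun x => Real.sqrt (u3 x) := Real.continuous_sqrt.measurable.comp hmu3
  have mU4 : Measurable fun x => Real.sqrt (u4 x) := Real.continuous_sqrt.measurable.comp hmu4
  have iu1 : Integrable u1 (volume.restrict Ω) := intB _ hmu1 bu1
  have iu2 : Integrable u2 (volume.restrict Ω) := intB _ hmu2 bu2
  have iu3 : Integrable u3 (volume.restrict Ω) := intB _ hmu3 bu3
  have iu4 : Integrable u4 (volume.restrict Ω) := intB _ hmu4 bu4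
  have iU1 : Integrable (fun x => Real.sqrt (u1 x)) (volume.restrict Ω) := intB _ mU1 bU1
  have iU2 : Integrable (fun x => Real.sqrt (u2 x)) (volume.restrict Ω) := intB _ mU2 bU2
  have iU3 : Integrable (fun x => Real.sqrt (u3 x)) (volume.restrict Ω) := intB _ mU3 bU3
  have iU4 : Integrable (fun x => Real.sqrt (u4 x)) (volume.restrict Ω) := intB _ mU4 bU4
  have iU1sq : Integrable (fun x => Real.sqrt (u1 x) ^ 2) (volume.restrict Ω) :=
    intB _ (mU1.pow_const 2) (bddSq bU1)
  have iU2sq : Integrable (fun x => Real.sqrt (u2 x) ^ 2) (volume.restrict Ω) :=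
    intB _ (mU2.pow_const 2) (bddSq bU2)
  have iU3sq : Integrable (fun x => Real.sqrt (u3 x) ^ 2) (volume.restrict Ω) :=
    intB _ (mU3.pow_const 2) (bddSq bU3)
  have iU4sq : Integrable (fun x => Real.sqrt (u4 x) ^ 2) (volume.restrict Ω) :=
    intB _ (mU4.pow_const 2) (bddSq bU4)
  -- gradient integrands are continuous and bounded on the bounded set Ω
  have cptΩ : IsCompact (closure Ω) := hΩbd.isCompact_closure
  have bgrad : ∀ {f : EuclideanSpace ℝ (Fin N) → ℝ}, Continuous f →
      ∃ C, ∀ x ∈ Ω, |f x| ≤ C := by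
    intro f hf
    obtain ⟨C, hC⟩ := cptΩ.exists_bound_of_continuousOn hf.continuousOn
    exact ⟨C, fun x hx => by
      simpa [Real.norm_eq_abs] using hC x (subset_closure hx)⟩
  have hgc1 : Continuous fun x => ‖fderiv ℝ (fun y => Real.sqrt (u1 y)) x‖ ^ 2 :=
    ((hsm1.continuous_fderiv one_ne_zero).norm).pow 2
  have hgc2 : Continuous fun x => ‖fderiv ℝ (fun y => Real.sqrt (u2 y)) x‖ ^ 2 :=
    ((hsm2.continuous_fderiv one_ne_zero).norm).pow 2
  have hgc3 : Continuous fun x => ‖fderiv ℝ (fun y => Real.sqrt (u3 y)) x‖ ^ 2 :=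
    ((hsm3.continuous_fderiv one_ne_zero).norm).pow 2
  have igrad1 : Integrable (fun x => ‖fderiv ℝ (fun y => Real.sqrt (u1 y)) x‖ ^ 2)
      (volume.restrict Ω) := intB _ hgc1.measurable (bgrad hgc1)
  have igrad2 : Integrable (fun x => ‖fderiv ℝ (fun y => Real.sqrt (u2 y)) x‖ ^ 2)
      (volume.restrict Ω) := intB _ hgc2.measurable (bgrad hgc2)
  have igrad3 : Integrable (fun x => ‖fderiv ℝ (fun y => Real.sqrt (u3 y)) x‖ ^ 2)
      (volume.restrict Ω) := intB _ hgc3.measurable (bgrad hgc3)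
  -- averages
  have havg : ∀ f : EuclideanSpace ℝ (Fin N) → ℝ, (⨍ y in Ω, f y) = (∫ y in Ω, f y)/V := by
    intro f; rw [setAverage_eq, smul_eq_mul, measureReal_def, ← hVdef]; ring
  have hJ1 : ∫ y in Ω, Real.sqrt (u1 y) = m1 * V := by
    rw [hm1def, havg]; field_simp
  have hJ2 : ∫ y in Ω, Real.sqrt (u2 y) = m2 * V := by
    rw [hm2def, havg]; field_simp
  have hJ3 : ∫ y in Ω, Real.sqrt (u3 y) = m3 * V := by
    rw [hm3def, havg]; field_simp
  have hJ4 : ∫ y in Ω, Real.sqrt (u4 y) = m4 * V := by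
    rw [hm4def, havg]; field_simp
  have hm10 : 0 ≤ m1 := by
    rw [hm1def, havg]
    exact div_nonneg (integral_nonneg fun x => Real.sqrt_nonneg _) hV.le
  have hm20 : 0 ≤ m2 := by
    rw [hm2def, havg]
    exact div_nonneg (integral_nonneg fun x => Real.sqrt_nonneg _) hV.le
  have hm30 : 0 ≤ m3 := by
    rw [hm3def, havg]
    exact div_nonneg (integral_nonneg fun x => Real.sqrt_nonneg _) hV.le
  have hm40 : 0 ≤ m4 := by
    rw [hm4def, havg]
    exact div_nonneg (integral_nonneg fun x => Real.sqrt_nonneg _) hV.le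
  -- masses
  rw [integral_add iu1 iu3] at hmass13
  rw [integral_add iu2 iu3] at hmass23
  rw [integral_add iu1 iu4] at hmass14
  have hiu1 : 0 ≤ ∫ x in Ω, u1 x := setIntegral_nonneg hΩm hnn1
  have hiu2 : 0 ≤ ∫ x in Ω, u2 x := setIntegral_nonneg hΩm hnn2
  have hiu3 : 0 ≤ ∫ x in Ω, u3 x := setIntegral_nonneg hΩm hnn3
  have hiu4 : 0 ≤ ∫ x in Ω, u4 x := setIntegral_nonneg hΩm hnn4
  -- squares of square roots
  have hsq1 : ∫ x in Ω, Real.sqrt (u1 x) ^ 2 = ∫ x in Ω, u1 x :=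
    congΩ _ _ fun x hx => Real.sq_sqrt (hnn1 x hx)
  have hsq2 : ∫ x in Ω, Real.sqrt (u2 x) ^ 2 = ∫ x in Ω, u2 x :=
    congΩ _ _ fun x hx => Real.sq_sqrt (hnn2 x hx)
  have hsq3 : ∫ x in Ω, Real.sqrt (u3 x) ^ 2 = ∫ x in Ω, u3 x :=
    congΩ _ _ fun x hx => Real.sq_sqrt (hnn3 x hx)
  have hsq4 : ∫ x in Ω, Real.sqrt (u4 x) ^ 2 = ∫ x in Ω, u4 x :=
    congΩ _ _ fun x hx => Real.sq_sqrt (hnn4 x hx)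
  have hμuniv : ((volume.restrict Ω) Set.univ).toReal = V := by
    rw [Measure.restrict_apply_univ, ← hVdef]
  -- variance identities
  have hkey1 : ∫ x in Ω, (Real.sqrt (u1 x) - m1) ^ 2 = (∫ x in Ω, u1 x) - V * m1 ^ 2 := by
    rw [integral_sub_const_sq iU1 iU1sq m1, hsq1, hJ1, hμuniv]; ring
  have hkey2 : ∫ x in Ω, (Real.sqrt (u2 x) - m2) ^ 2 = (∫ x in Ω, u2 x) - V * m2 ^ 2 := by
    rw [integral_sub_const_sq iU2 iU2sq m2, hsq2, hJ2, hμuniv]; ring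
  have hkey3 : ∫ x in Ω, (Real.sqrt (u3 x) - m3) ^ 2 = (∫ x in Ω, u3 x) - V * m3 ^ 2 := by
    rw [integral_sub_const_sq iU3 iU3sq m3, hsq3, hJ3, hμuniv]; ring
  have hkey4 : ∀ c : ℝ, ∫ x in Ω, (Real.sqrt (u4 x) - c) ^ 2
      = (∫ x in Ω, u4 x) - 2*c*(m4*V) + c^2*V := by
    intro c
    rw [integral_sub_const_sq iU4 iU4sq c, hsq4, hJ4, hμuniv]
  have hVar : Var = (∫ x in Ω, u4 x) - V * m4 ^ 2 := by
    rw [hVardef, hkey4 m4]; ring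
  have hVar0 : 0 ≤ Var := by
    rw [hVardef]; exact integral_nonneg fun x => sq_nonneg _
  have hVarle : ∀ c : ℝ, Var ≤ ∫ x in Ω, (Real.sqrt (u4 x) - c) ^ 2 := by
    intro c
    rw [hVar, hkey4 c]
    nlinarith only [sq_nonneg (m4 - c), hV]
  -- nonnegativity of dissipation pieces
  have hI10 : 0 ≤ I1 := by rw [hI1def]; exact integral_nonneg fun x => sq_nonneg _
  have hI20 : 0 ≤ I2 := by rw [hI2def]; exact integral_nonneg fun x => sq_nonneg _
  have hI30 : 0 ≤ I3 := by rw [hI3def]; exact integral_nonneg fun x => sq_nonneg _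
  have hIδ0 : 0 ≤ Iδ := by rw [hIδdef]; exact integral_nonneg fun x => sq_nonneg _
  have hmx10 : 0 ≤ mx1 := by
    rw [hmx1def]
    exact Real.rpow_nonneg (integral_nonneg fun x => Real.rpow_nonneg (abs_nonneg _) _) _
  have hmx40 : 0 ≤ mx4 := by
    rw [hmx4def]
    exact Real.rpow_nonneg (integral_nonneg fun x => Real.rpow_nonneg (abs_nonneg _) _) _
  -- Sobolev consequence of hPW
  have sobolev : ∀ f : EuclideanSpace ℝ (Fin N) → ℝ, ContDiff ℝ 1 f →
      (∫ x in Ω, |f x - ⨍ y in Ω, f y| ^ (2*p)) ^ (1/p)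
        ≤ (∫ x in Ω, ‖fderiv ℝ f x‖ ^ 2) / CΩ^2 := by
    intro f hf
    rw [h2p]
    have h := hPW f hf
    set S : ℝ := ∫ x in Ω, |f x - ⨍ y in Ω, f y| ^ (2*(N:ℝ)/((N:ℝ)-2)) with hSdef
    have hS0 : 0 ≤ S := by
      rw [hSdef]; exact integral_nonneg fun x => Real.rpow_nonneg (abs_nonneg _) _
    set I : ℝ := ∫ x in Ω, ‖fderiv ℝ f x‖ ^ 2 with hIdef
    have hI0 : 0 ≤ I := by rw [hIdef]; exact integral_nonneg fun x => sq_nonneg _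
    have hL0 : 0 ≤ CΩ * S ^ (((N:ℝ)-2)/(2*(N:ℝ))) := mul_nonneg hCΩ.le (Real.rpow_nonneg hS0 _)
    have hsq := pow_le_pow_left₀ hL0 h 2
    rw [mul_pow] at hsq
    have e1 : (S ^ (((N:ℝ)-2)/(2*(N:ℝ))))^2 = S ^ (1/p) := by
      rw [← Real.rpow_natCast (S ^ (((N:ℝ)-2)/(2*(N:ℝ)))) 2, ← Real.rpow_mul hS0]
      congr 1
      rw [h1p]
      push_cast
      field_simp
    have e2' : (I ^ ((1:ℝ)/2))^2 = I := by
      rw [← Real.rpow_natCast (I ^ ((1:ℝ)/2)) 2, ← Real.rpow_mul hI0]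
      norm_num
    rw [e1, e2'] at hsq
    rw [le_div_iff₀ hCΩ2]
    linarith only [hsq]
  have sob1 := sobolev (fun x => Real.sqrt (u1 x)) hsm1
  have sob2 := sobolev (fun x => Real.sqrt (u2 x)) hsm2
  have sob3 := sobolev (fun x => Real.sqrt (u3 x)) hsm3
  rw [← hm1def, ← hI1def] at sob1
  rw [← hm2def, ← hI2def] at sob2
  rw [← hm3def, ← hI3def] at sob3
  -- Poincaré in L²
  have honeq : (∫ x in Ω, (1:ℝ) ^ q) = V := by
    rw [congΩ _ _ (fun x _ => Real.one_rpow q), setIntegral_const, smul_eq_mul, mul_one, measureReal_def, ← hVdef]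
  have memOne : ∀ pp : ℝ≥0∞, MemLp (fun _ : EuclideanSpace ℝ (Fin N) => (1:ℝ)) pp
      (volume.restrict Ω) := memB _ measurable_const ⟨1, fun x _ => by norm_num⟩
  have PL1 : ∫ x in Ω, (Real.sqrt (u1 x) - m1)^2 ≤ E * I1 := by
    have hold := holder_sq_mul (μ := volume.restrict Ω) hpq
      (Filter.Eventually.of_forall fun x => zero_le_one)
      (memB (fun x => (Real.sqrt (u1 x) - m1)^2) ((mU1.sub measurable_const).pow_const 2)
        (bddSq (bddSubC m1 bU1)) _) (memOne _)
    rw [congΩ _ _ (fun x _ => mul_one _), honeq, h1q] at hold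
    calc ∫ x in Ω, (Real.sqrt (u1 x) - m1)^2
        ≤ (∫ x in Ω, |Real.sqrt (u1 x) - m1| ^ (2*p)) ^ (1/p) * V ^ (2/(N:ℝ)) := hold
      _ ≤ (I1/CΩ^2) * V ^ (2/(N:ℝ)) :=
          mul_le_mul_of_nonneg_right sob1 (Real.rpow_nonneg hV.le _)
      _ = E * I1 := by rw [hEdef]; ring
  have PL2 : ∫ x in Ω, (Real.sqrt (u2 x) - m2)^2 ≤ E * I2 := by
    have hold := holder_sq_mul (μ := volume.restrict Ω) hpq
      (Filter.Eventually.of_forall fun x => zero_le_one)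
      (memB (fun x => (Real.sqrt (u2 x) - m2)^2) ((mU2.sub measurable_const).pow_const 2)
        (bddSq (bddSubC m2 bU2)) _) (memOne _)
    rw [congΩ _ _ (fun x _ => mul_one _), honeq, h1q] at hold
    calc ∫ x in Ω, (Real.sqrt (u2 x) - m2)^2
        ≤ (∫ x in Ω, |Real.sqrt (u2 x) - m2| ^ (2*p)) ^ (1/p) * V ^ (2/(N:ℝ)) := hold
      _ ≤ (I2/CΩ^2) * V ^ (2/(N:ℝ)) :=
          mul_le_mul_of_nonneg_right sob2 (Real.rpow_nonneg hV.le _)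
      _ = E * I2 := by rw [hEdef]; ring
  have PL3 : ∫ x in Ω, (Real.sqrt (u3 x) - m3)^2 ≤ E * I3 := by
    have hold := holder_sq_mul (μ := volume.restrict Ω) hpq
      (Filter.Eventually.of_forall fun x => zero_le_one)
      (memB (fun x => (Real.sqrt (u3 x) - m3)^2) ((mU3.sub measurable_const).pow_const 2)
        (bddSq (bddSubC m3 bU3)) _) (memOne _)
    rw [congΩ _ _ (fun x _ => mul_one _), honeq, h1q] at hold
    calc ∫ x in Ω, (Real.sqrt (u3 x) - m3)^2
        ≤ (∫ x in Ω, |Real.sqrt (u3 x) - m3| ^ (2*p)) ^ (1/p) * V ^ (2/(N:ℝ)) := hold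
      _ ≤ (I3/CΩ^2) * V ^ (2/(N:ℝ)) :=
          mul_le_mul_of_nonneg_right sob3 (Real.rpow_nonneg hV.le _)
      _ = E * I3 := by rw [hEdef]; ring
  -- Hölder against u4 and u1
  have H4 : ∫ x in Ω, (Real.sqrt (u3 x) - m3)^2 * u4 x ≤ (I3/CΩ^2) * mx4 := by
    have hold := holder_sq_mul (μ := volume.restrict Ω) hpq
      (by filter_upwards [haeΩ] with x hx using hnn4 x hx)
      (memB (fun x => (Real.sqrt (u3 x) - m3)^2) ((mU3.sub measurable_const).pow_const 2)
        (bddSq (bddSubC m3 bU3)) _) (memB u4 hmu4 bu4 _)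
    have habs : (∫ x in Ω, u4 x ^ q) = ∫ x in Ω, |u4 x| ^ q :=
      congΩ _ _ fun x hx => by rw [abs_of_nonneg (hnn4 x hx)]
    rw [habs, h1q, ← hmx4def] at hold
    calc ∫ x in Ω, (Real.sqrt (u3 x) - m3)^2 * u4 x
        ≤ (∫ x in Ω, |Real.sqrt (u3 x) - m3| ^ (2*p)) ^ (1/p) * mx4 := hold
      _ ≤ (I3/CΩ^2) * mx4 := mul_le_mul_of_nonneg_right sob3 hmx40
  have H1 : ∫ x in Ω, (Real.sqrt (u2 x) - m2)^2 * u1 x ≤ (I2/CΩ^2) * mx1 := by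
    have hold := holder_sq_mul (μ := volume.restrict Ω) hpq
      (by filter_upwards [haeΩ] with x hx using hnn1 x hx)
      (memB (fun x => (Real.sqrt (u2 x) - m2)^2) ((mU2.sub measurable_const).pow_const 2)
        (bddSq (bddSubC m2 bU2)) _) (memB u1 hmu1 bu1 _)
    have habs : (∫ x in Ω, u1 x ^ q) = ∫ x in Ω, |u1 x| ^ q :=
      congΩ _ _ fun x hx => by rw [abs_of_nonneg (hnn1 x hx)]
    rw [habs, h1q, ← hmx1def] at hold
    calc ∫ x in Ω, (Real.sqrt (u2 x) - m2)^2 * u1 x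
        ≤ (∫ x in Ω, |Real.sqrt (u2 x) - m2| ^ (2*p)) ^ (1/p) * mx1 := hold
      _ ≤ (I2/CΩ^2) * mx1 := mul_le_mul_of_nonneg_right sob2 hmx10
  -- Cauchy-Schwarz wrapper
  have csΩ : ∀ f g : EuclideanSpace ℝ (Fin N) → ℝ, Measurable f → Measurable g →
      (∃ C, ∀ x ∈ Ω, |f x| ≤ C) → (∃ C, ∀ x ∈ Ω, |g x| ≤ C) →
      (∀ x, 0 ≤ f x) → (∀ x, 0 ≤ g x) →
      ∫ x in Ω, f x * g x
        ≤ Real.sqrt (∫ x in Ω, f x ^ 2) * Real.sqrt (∫ x in Ω, g x ^ 2) :=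
    fun f g mf mg bf bg nf ng =>
      integral_mul_le_sqrt (Filter.Eventually.of_forall nf) (Filter.Eventually.of_forall ng)
        (memB f mf bf _) (memB g mg bg _)
  -- flatten the nested integrals in the goal
  have e3eq : ∫ x in Ω, (‖fderiv ℝ (fun y => Real.sqrt (u3 y)) x‖ ^ 2 + Iδ) = I3 + Iδ*V := by
    rw [integral_add igrad3 (integrable_const _), setIntegral_const, smul_eq_mul, ← hI3def,
      measureReal_def, ← hVdef]
    ring
  simp only [e3eq]
  have e2eq : ∫ x in Ω, (‖fderiv ℝ (fun y => Real.sqrt (u2 y)) x‖ ^ 2 + d3 * (I3 + Iδ*V))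
      = I2 + d3*(I3 + Iδ*V)*V := by
    rw [integral_add igrad2 (integrable_const _), setIntegral_const, smul_eq_mul, ← hI2def,
      measureReal_def, ← hVdef]
    ring
  simp only [e2eq]
  have e1eq : ∫ x in Ω, (‖fderiv ℝ (fun y => Real.sqrt (u1 y)) x‖ ^ 2
      + d2 * (I2 + d3*(I3 + Iδ*V)*V)) = I1 + d2*(I2 + d3*(I3 + Iδ*V)*V)*V := by
    rw [integral_add igrad1 (integrable_const _), setIntegral_const, smul_eq_mul, ← hI1def,
      measureReal_def, ← hVdef]
    ring
  simp only [e1eq]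
  set Gd : ℝ := d1*I1 + e2*I2 + e3*I3 + e4*Iδ with hGddef
  have hflat : 4 * (d1 * (I1 + d2*(I2 + d3*(I3 + Iδ*V)*V)*V)) = 4 * Gd := by
    rw [hGddef, he2def, he3def, he4def]; ring
  rw [hflat]
  -- final reductions
  have hGd0 : 0 ≤ Gd := by
    rw [hGddef]
    have a1 := mul_nonneg hd1.le hI10
    have a2 := mul_nonneg he2.le hI20
    have a3 := mul_nonneg he3.le hI30
    have a4 := mul_nonneg he4.le hIδ0
    linarith only [a1, a2, a3, a4]
  have hI1G : I1 ≤ Gd/d1 := by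
    rw [le_div_iff₀ hd1, hGddef]
    linarith only [mul_nonneg he2.le hI20, mul_nonneg he3.le hI30, mul_nonneg he4.le hIδ0]
  have hI2G : I2 ≤ Gd/e2 := by
    rw [le_div_iff₀ he2, hGddef]
    linarith only [mul_nonneg hd1.le hI10, mul_nonneg he3.le hI30, mul_nonneg he4.le hIδ0]
  have hI3G : I3 ≤ Gd/e3 := by
    rw [le_div_iff₀ he3, hGddef]
    linarith only [mul_nonneg hd1.le hI10, mul_nonneg he2.le hI20, mul_nonneg he4.le hIδ0]
  have hIδG : Iδ ≤ Gd/e4 := by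
    rw [le_div_iff₀ he4, hGddef]
    linarith only [mul_nonneg hd1.le hI10, mul_nonneg he2.le hI20, mul_nonneg he3.le hI30]
  have hmx : 0 ≤ max mx1 mx4 := le_trans hmx10 (le_max_left _ _)
  have hden : (0:ℝ) < 1 + max mx1 mx4 := by linarith only [hmx]
  rw [ge_iff_le, div_mul_eq_mul_div, div_le_iff₀ hden]
  -- goal : K2v * Var ≤ 4 * Gd * (1 + max mx1 mx4)
  have hK2a : K2v ≤ ε₀/(2*V*C₂) := min_le_left _ _
  have hK2b : K2v ≤ 4*g₀/M14 := min_le_right _ _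
  rcases le_or_gt g₀ Gd with hcase | hcase
  · -- large dissipation
    have hVarM : Var ≤ M14 := by
      rw [hVar]
      linarith only [mul_nonneg hV.le (sq_nonneg m4), hmass14, hiu1]
    calc K2v * Var ≤ (4*g₀/M14) * M14 :=
          mul_le_mul hK2b hVarM hVar0 (le_of_lt (div_pos (by linarith only [hg₀]) hM14))
      _ = 4*g₀ := by field_simp
      _ ≤ 4*Gd := by linarith only [hcase]
      _ ≤ 4*Gd*(1 + max mx1 mx4) :=
          le_mul_of_one_le_right (by linarith only [hGd0]) (by linarith only [hmx])
  · -- small dissipation : Gd < g₀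
    have hP1nn : 0 ≤ ∫ x in Ω, (Real.sqrt (u1 x) - m1)^2 := integral_nonneg fun x => sq_nonneg _
    have hP2nn : 0 ≤ ∫ x in Ω, (Real.sqrt (u2 x) - m2)^2 := integral_nonneg fun x => sq_nonneg _
    have hP3nn : 0 ≤ ∫ x in Ω, (Real.sqrt (u3 x) - m3)^2 := integral_nonneg fun x => sq_nonneg _
    have hPL1g : ∫ x in Ω, (Real.sqrt (u1 x) - m1)^2 ≤ E*(g₀/d1) :=
      PL1.trans (mul_le_mul_of_nonneg_left (hI1G.trans ((div_le_div_iff_of_pos_right hd1).2 hcase.le)) hE.le)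
    have hPL2g : ∫ x in Ω, (Real.sqrt (u2 x) - m2)^2 ≤ E*(g₀/e2) :=
      PL2.trans (mul_le_mul_of_nonneg_left (hI2G.trans ((div_le_div_iff_of_pos_right he2).2 hcase.le)) hE.le)
    have hPL3g : ∫ x in Ω, (Real.sqrt (u3 x) - m3)^2 ≤ E*(g₀/e3) :=
      PL3.trans (mul_le_mul_of_nonneg_left (hI3G.trans ((div_le_div_iff_of_pos_right he3).2 hcase.le)) hE.le)
    rcases le_or_gt ε₀ (∫ x in Ω, u3 x) with h3 | h3
    · -- case A : reaction with u3 transfers the Poincaré inequality to u4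
      have hg1 : g₀ ≤ ε₀*e3/(2*E) := by rw [hg₀def]; exact min_le_left _ _
      have hEg3 : E*(g₀/e3) ≤ ε₀/2 := by
        calc E*(g₀/e3) ≤ E*((ε₀*e3/(2*E))/e3) :=
              mul_le_mul_of_nonneg_left ((div_le_div_iff_of_pos_right he3).2 hg1) hE.le
          _ = ε₀/2 := by
              field_simp [hE.ne', he3.ne']
      have hm3sq : ε₀/(2*V) ≤ m3^2 := by
        rw [div_le_iff₀ (by linarith only [hV] : (0:ℝ) < 2*V)]
        linarith only [hkey3, hPL3g, hEg3, h3]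
      have hm3pos : 0 < m3 := by
        have hpos : 0 < ε₀/(2*V) := div_pos hε (by linarith only [hV])
        nlinarith only [hm3sq, hm30, hpos]
      set av : ℝ := m1*m2/m3 with havdef
      have ham3 : m3 * av = m1*m2 := by rw [havdef]; field_simp
      have key4 : ∀ A B C D : ℝ, (A+B+C-D)^2 ≤ 4*(A^2+B^2+C^2+D^2) := by
        intro A B C D
        nlinarith only [sq_nonneg (A-B), sq_nonneg (A-C), sq_nonneg (A+D), sq_nonneg (B-C),
          sq_nonneg (B+D), sq_nonneg (C+D)]
      have hptw : ∀ x ∈ Ω, (m3*(Real.sqrt (u4 x) - av))^2 ≤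
          4*((Real.sqrt (u3 x) - m3)^2*u4 x + m2^2*(Real.sqrt (u1 x) - m1)^2
            + (Real.sqrt (u2 x) - m2)^2*u1 x
            + (Real.sqrt (u1 x)*Real.sqrt (u2 x) - Real.sqrt (u3 x)*Real.sqrt (u4 x))^2) := by
        intro x hx
        have h4x : Real.sqrt (u4 x)^2 = u4 x := Real.sq_sqrt (hnn4 x hx)
        have h1x : Real.sqrt (u1 x)^2 = u1 x := Real.sq_sqrt (hnn1 x hx)
        have hid : m3*(Real.sqrt (u4 x) - av)
            = (m3 - Real.sqrt (u3 x))*Real.sqrt (u4 x) + m2*(Real.sqrt (u1 x) - m1)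
              + Real.sqrt (u1 x)*(Real.sqrt (u2 x) - m2)
              - (Real.sqrt (u1 x)*Real.sqrt (u2 x) - Real.sqrt (u3 x)*Real.sqrt (u4 x)) := by
          rw [mul_sub, ham3]; ring
        calc (m3*(Real.sqrt (u4 x) - av))^2
            = ((m3 - Real.sqrt (u3 x))*Real.sqrt (u4 x) + m2*(Real.sqrt (u1 x) - m1)
              + Real.sqrt (u1 x)*(Real.sqrt (u2 x) - m2)
              - (Real.sqrt (u1 x)*Real.sqrt (u2 x) - Real.sqrt (u3 x)*Real.sqrt (u4 x)))^2 := by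
              rw [hid]
          _ ≤ 4*(((m3 - Real.sqrt (u3 x))*Real.sqrt (u4 x))^2 + (m2*(Real.sqrt (u1 x) - m1))^2
              + (Real.sqrt (u1 x)*(Real.sqrt (u2 x) - m2))^2
              + (Real.sqrt (u1 x)*Real.sqrt (u2 x) - Real.sqrt (u3 x)*Real.sqrt (u4 x))^2) :=
              key4 _ _ _ _
          _ = 4*((Real.sqrt (u3 x) - m3)^2*u4 x + m2^2*(Real.sqrt (u1 x) - m1)^2
              + (Real.sqrt (u2 x) - m2)^2*u1 x
              + (Real.sqrt (u1 x)*Real.sqrt (u2 x) - Real.sqrt (u3 x)*Real.sqrt (u4 x))^2) := by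
              linear_combination (4*(Real.sqrt (u3 x) - m3)^2) * h4x
                + (4*(Real.sqrt (u2 x) - m2)^2) * h1x
      -- integrate the pointwise bound
      have iA : Integrable (fun x => (Real.sqrt (u3 x) - m3)^2*u4 x) (volume.restrict Ω) :=
        intB _ (((mU3.sub measurable_const).pow_const 2).mul hmu4)
          (bddMul (bddSq (bddSubC m3 bU3)) bu4)
      have iB : Integrable (fun x => (Real.sqrt (u1 x) - m1)^2) (volume.restrict Ω) :=
        intB _ ((mU1.sub measurable_const).pow_const 2) (bddSq (bddSubC m1 bU1))
      have iB2 : Integrable (fun x => m2^2*(Real.sqrt (u1 x) - m1)^2) (volume.restrict Ω) :=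
        iB.const_mul _
      have iC : Integrable (fun x => (Real.sqrt (u2 x) - m2)^2*u1 x) (volume.restrict Ω) :=
        intB _ (((mU2.sub measurable_const).pow_const 2).mul hmu1)
          (bddMul (bddSq (bddSubC m2 bU2)) bu1)
      have iD : Integrable (fun x =>
          (Real.sqrt (u1 x)*Real.sqrt (u2 x) - Real.sqrt (u3 x)*Real.sqrt (u4 x))^2)
          (volume.restrict Ω) :=
        intB _ (((mU1.mul mU2).sub (mU3.mul mU4)).pow_const 2)
          (bddSq (bddSub2 (bddMul bU1 bU2) (bddMul bU3 bU4)))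
      have iAB : Integrable (fun x => (Real.sqrt (u3 x) - m3)^2*u4 x
          + m2^2*(Real.sqrt (u1 x) - m1)^2) (volume.restrict Ω) := iA.add iB2
      have iABC : Integrable (fun x => (Real.sqrt (u3 x) - m3)^2*u4 x
          + m2^2*(Real.sqrt (u1 x) - m1)^2 + (Real.sqrt (u2 x) - m2)^2*u1 x)
          (volume.restrict Ω) := iAB.add iC
      have iL : Integrable (fun x => (m3*(Real.sqrt (u4 x) - av))^2) (volume.restrict Ω) :=
        intB _ ((measurable_const.mul (mU4.sub measurable_const)).pow_const 2)
          (bddSq (bddMul ⟨|m3|, fun x _ => le_rfl⟩ (bddSubC av bU4)))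
      have iR : Integrable (fun x => 4*((Real.sqrt (u3 x) - m3)^2*u4 x
          + m2^2*(Real.sqrt (u1 x) - m1)^2 + (Real.sqrt (u2 x) - m2)^2*u1 x
          + (Real.sqrt (u1 x)*Real.sqrt (u2 x) - Real.sqrt (u3 x)*Real.sqrt (u4 x))^2))
          (volume.restrict Ω) := (iABC.add iD).const_mul 4
      have hmono := setIntegral_mono_on iL iR hΩm hptw
      have hLeq : ∫ x in Ω, (m3*(Real.sqrt (u4 x) - av))^2
          = m3^2 * ∫ x in Ω, (Real.sqrt (u4 x) - av)^2 := by
        rw [← integral_const_mul]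
        exact congΩ _ _ fun x _ => by ring
      have hReq : ∫ x in Ω, 4*((Real.sqrt (u3 x) - m3)^2*u4 x
          + m2^2*(Real.sqrt (u1 x) - m1)^2 + (Real.sqrt (u2 x) - m2)^2*u1 x
          + (Real.sqrt (u1 x)*Real.sqrt (u2 x) - Real.sqrt (u3 x)*Real.sqrt (u4 x))^2)
          = 4*((∫ x in Ω, (Real.sqrt (u3 x) - m3)^2*u4 x)
            + m2^2*(∫ x in Ω, (Real.sqrt (u1 x) - m1)^2)
            + (∫ x in Ω, (Real.sqrt (u2 x) - m2)^2*u1 x) + Iδ) := by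
        rw [integral_const_mul, integral_add iABC iD, integral_add iAB iC,
          integral_add iA iB2, integral_const_mul, ← hIδdef]
      rw [hLeq, hReq] at hmono
      -- bound each of the four pieces by a multiple of X := Gd*(1+max)
      have hAb : ∫ x in Ω, (Real.sqrt (u3 x) - m3)^2*u4 x
          ≤ (1/(CΩ^2*e3))*(Gd*(1 + max mx1 mx4)) := by
        calc ∫ x in Ω, (Real.sqrt (u3 x) - m3)^2*u4 x ≤ (I3/CΩ^2) * mx4 := H4
          _ ≤ ((Gd/e3)/CΩ^2) * (1 + max mx1 mx4) := by
              apply mul_le_mul ((div_le_div_iff_of_pos_right hCΩ2).2 hI3G)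
                (le_trans (le_max_right mx1 mx4) (by linarith only [])) hmx40
              exact div_nonneg (div_nonneg hGd0 he3.le) hCΩ2.le
          _ = (1/(CΩ^2*e3))*(Gd*(1 + max mx1 mx4)) := by ring
      have hBb : m2^2*(∫ x in Ω, (Real.sqrt (u1 x) - m1)^2)
          ≤ (M23*E/(V*d1))*(Gd*(1 + max mx1 mx4)) := by
        have hm2sq : m2^2 ≤ M23/V := by
          rw [le_div_iff₀ hV]
          linarith only [hkey2, hP2nn, hiu3, hmass23]
        have hB1' : ∫ x in Ω, (Real.sqrt (u1 x) - m1)^2 ≤ E*(Gd/d1) :=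
          PL1.trans (mul_le_mul_of_nonneg_left hI1G hE.le)
        calc m2^2*(∫ x in Ω, (Real.sqrt (u1 x) - m1)^2) ≤ (M23/V)*(E*(Gd/d1)) :=
              mul_le_mul hm2sq hB1' hP1nn
                (div_nonneg hM23.le hV.le)
          _ = (M23*E/(V*d1))*Gd := by
              field_simp
          _ ≤ (M23*E/(V*d1))*(Gd*(1 + max mx1 mx4)) := by
              rw [← mul_assoc]
              refine le_mul_of_one_le_right ?_ (by linarith only [hmx])
              exact mul_nonneg (div_nonneg (mul_nonneg hM23.le hE.le)
                (mul_nonneg hV.le hd1.le)) hGd0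
      have hCb : ∫ x in Ω, (Real.sqrt (u2 x) - m2)^2*u1 x
          ≤ (1/(CΩ^2*e2))*(Gd*(1 + max mx1 mx4)) := by
        calc ∫ x in Ω, (Real.sqrt (u2 x) - m2)^2*u1 x ≤ (I2/CΩ^2) * mx1 := H1
          _ ≤ ((Gd/e2)/CΩ^2) * (1 + max mx1 mx4) := by
              apply mul_le_mul ((div_le_div_iff_of_pos_right hCΩ2).2 hI2G)
                (le_trans (le_max_left mx1 mx4) (by linarith only [])) hmx10
              exact div_nonneg (div_nonneg hGd0 he2.le) hCΩ2.le
          _ = (1/(CΩ^2*e2))*(Gd*(1 + max mx1 mx4)) := by ring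
      have hDb : Iδ ≤ (1/e4)*(Gd*(1 + max mx1 mx4)) := by
        calc Iδ ≤ Gd/e4 := hIδG
          _ = (1/e4)*Gd := by ring
          _ ≤ (1/e4)*(Gd*(1 + max mx1 mx4)) := by
              refine mul_le_mul_of_nonneg_left ?_ (le_of_lt (div_pos one_pos he4))
              exact le_mul_of_one_le_right hGd0 (by linarith only [hmx])
      have hsum : m3^2 * ∫ x in Ω, (Real.sqrt (u4 x) - av)^2
          ≤ 4*(C₂*(Gd*(1 + max mx1 mx4))) := by
        calc m3^2 * ∫ x in Ω, (Real.sqrt (u4 x) - av)^2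
            ≤ 4*((∫ x in Ω, (Real.sqrt (u3 x) - m3)^2*u4 x)
              + m2^2*(∫ x in Ω, (Real.sqrt (u1 x) - m1)^2)
              + (∫ x in Ω, (Real.sqrt (u2 x) - m2)^2*u1 x) + Iδ) := hmono
          _ ≤ 4*((1/(CΩ^2*e3))*(Gd*(1 + max mx1 mx4))
              + (M23*E/(V*d1))*(Gd*(1 + max mx1 mx4))
              + (1/(CΩ^2*e2))*(Gd*(1 + max mx1 mx4)) + (1/e4)*(Gd*(1 + max mx1 mx4))) := by
              have h := add_le_add (add_le_add (add_le_add hAb hBb) hCb) hDb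
              linarith only [h]
          _ = 4*(C₂*(Gd*(1 + max mx1 mx4))) := by rw [hC₂def]; ring
      have hchain : (ε₀/(2*V))*Var ≤ 4*(C₂*(Gd*(1 + max mx1 mx4))) := by
        calc (ε₀/(2*V))*Var ≤ m3^2*Var := mul_le_mul_of_nonneg_right hm3sq hVar0
          _ ≤ m3^2 * ∫ x in Ω, (Real.sqrt (u4 x) - av)^2 :=
              mul_le_mul_of_nonneg_left (hVarle av) (sq_nonneg m3)
          _ ≤ 4*(C₂*(Gd*(1 + max mx1 mx4))) := hsum
      calc K2v * Var ≤ (ε₀/(2*V*C₂)) * Var := mul_le_mul_of_nonneg_right hK2a hVar0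
        _ = ((ε₀/(2*V))*Var)/C₂ := by
            rw [show 2*V*C₂ = (2*V)*C₂ by ring, ← div_div, div_mul_eq_mul_div]
        _ ≤ (4*(C₂*(Gd*(1 + max mx1 mx4))))/C₂ := (div_le_div_iff_of_pos_right hC₂).2 hchain
        _ = 4 * Gd * (1 + max mx1 mx4) := by
            field_simp
    · -- case B : u3 is small, contradiction with the masses
      exfalso
      have hε1 : ε₀ ≤ M13/4 := by rw [hεdef]; exact min_le_left _ _
      have hε2 : ε₀ ≤ M23/4 := by
        rw [hεdef]; exact (min_le_right _ _).trans (min_le_left _ _)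
      have hε3 : ε₀ ≤ β^2/(16*M14) := by
        rw [hεdef]; exact (min_le_right _ _).trans (min_le_right _ _)
      have hgb : g₀ ≤ M13*d1/(4*E) := by
        rw [hg₀def]; exact (min_le_right _ _).trans (min_le_left _ _)
      have hgc : g₀ ≤ M23*e2/(4*E) := by
        rw [hg₀def]
        exact (min_le_right _ _).trans ((min_le_right _ _).trans (min_le_left _ _))
      have hgd : g₀ ≤ β*d1/E := by
        rw [hg₀def]
        exact (min_le_right _ _).trans ((min_le_right _ _).trans
          ((min_le_right _ _).trans (min_le_left _ _)))
      have hge : g₀ ≤ β*e2/E := by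
        rw [hg₀def]
        exact (min_le_right _ _).trans ((min_le_right _ _).trans
          ((min_le_right _ _).trans ((min_le_right _ _).trans (min_le_left _ _))))
      have hgf : g₀ ≤ β^2*e4/(16*V) := by
        rw [hg₀def]
        exact (min_le_right _ _).trans ((min_le_right _ _).trans
          ((min_le_right _ _).trans ((min_le_right _ _).trans (min_le_right _ _))))
      -- lower bounds for m1 and m2
      have hE14 : E*(g₀/d1) ≤ M13/4 := by
        calc E*(g₀/d1) ≤ E*((M13*d1/(4*E))/d1) :=
              mul_le_mul_of_nonneg_left ((div_le_div_iff_of_pos_right hd1).2 hgb) hE.le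
          _ = M13/4 := by
              field_simp
      have hE24 : E*(g₀/e2) ≤ M23/4 := by
        calc E*(g₀/e2) ≤ E*((M23*e2/(4*E))/e2) :=
              mul_le_mul_of_nonneg_left ((div_le_div_iff_of_pos_right he2).2 hgc) hE.le
          _ = M23/4 := by
              field_simp
      have hm1sq : M13/(2*V) ≤ m1^2 := by
        rw [div_le_iff₀ (by linarith only [hV] : (0:ℝ) < 2*V)]
        linarith only [hkey1, hPL1g, hE14, h3.le, hmass13, hε1]
      have hm2sq : M23/(2*V) ≤ m2^2 := by
        rw [div_le_iff₀ (by linarith only [hV] : (0:ℝ) < 2*V)]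
        linarith only [hkey2, hPL2g, hE24, h3.le, hmass23, hε2]
      have hm1low : Real.sqrt (M13/(2*V)) ≤ m1 := by
        have h := Real.sqrt_le_sqrt hm1sq
        rwa [Real.sqrt_sq hm10] at h
      have hm2low : Real.sqrt (M23/(2*V)) ≤ m2 := by
        have h := Real.sqrt_le_sqrt hm2sq
        rwa [Real.sqrt_sq hm20] at h
      -- V * m1 * m2 ≥ 2β
      set W : ℝ := V*(Real.sqrt (M13/(2*V))*Real.sqrt (M23/(2*V))) with hWdef
      have hW0 : 0 ≤ W := by
        rw [hWdef]
        exact mul_nonneg hV.le (mul_nonneg (Real.sqrt_nonneg _) (Real.sqrt_nonneg _))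
      have hWsq : W^2 = M13*M23/4 := by
        rw [hWdef, mul_pow, mul_pow,
          Real.sq_sqrt (le_of_lt (div_pos hM13 (by linarith only [hV]))),
          Real.sq_sqrt (le_of_lt (div_pos hM23 (by linarith only [hV])))]
        field_simp
        ring
      have h2β : 2*β ≤ W := by
        have hMM : M13*M23 = (2*W)^2 := by rw [mul_pow, hWsq]; ring
        rw [hβdef, hMM, Real.sqrt_sq (by linarith only [hW0])]
        linarith only []
      have hVm1m2 : 2*β ≤ V*(m1*m2) := by
        refine h2β.trans ?_
        rw [hWdef]
        exact mul_le_mul_of_nonneg_left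
          (mul_le_mul hm1low hm2low (Real.sqrt_nonneg _) hm10) hV.le
      -- the cross term is at least -β
      have iC12 : Integrable (fun x => (Real.sqrt (u1 x) - m1)*(Real.sqrt (u2 x) - m2))
          (volume.restrict Ω) :=
        intB _ ((mU1.sub measurable_const).mul (mU2.sub measurable_const))
          (bddMul (bddSubC m1 bU1) (bddSubC m2 bU2))
      have iC12n : Integrable (fun x => -((Real.sqrt (u1 x) - m1)*(Real.sqrt (u2 x) - m2)))
          (volume.restrict Ω) := iC12.neg
      have iC12abs : Integrable (fun x => |Real.sqrt (u1 x) - m1| * |Real.sqrt (u2 x) - m2|)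
          (volume.restrict Ω) :=
        intB _ (((mU1.sub measurable_const).abs).mul ((mU2.sub measurable_const).abs))
          (bddMul (bddAbs (bddSubC m1 bU1)) (bddAbs (bddSubC m2 bU2)))
      have hcross : -β ≤ ∫ x in Ω, (Real.sqrt (u1 x) - m1)*(Real.sqrt (u2 x) - m2) := by
        have hneg : ∫ x in Ω, -((Real.sqrt (u1 x) - m1)*(Real.sqrt (u2 x) - m2))
            ≤ ∫ x in Ω, |Real.sqrt (u1 x) - m1| * |Real.sqrt (u2 x) - m2| :=
          setIntegral_mono_on iC12n iC12abs hΩm fun x _ => by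
            rw [← abs_mul]; exact neg_le_abs _
        rw [integral_neg] at hneg
        have hcs := csΩ (fun x => |Real.sqrt (u1 x) - m1|) (fun x => |Real.sqrt (u2 x) - m2|)
          ((mU1.sub measurable_const).abs) ((mU2.sub measurable_const).abs)
          (bddAbs (bddSubC m1 bU1)) (bddAbs (bddSubC m2 bU2))
          (fun x => abs_nonneg _) (fun x => abs_nonneg _)
        rw [show (∫ x in Ω, |Real.sqrt (u1 x) - m1|^2) = ∫ x in Ω, (Real.sqrt (u1 x) - m1)^2
            from congΩ _ _ fun x _ => sq_abs _,
          show (∫ x in Ω, |Real.sqrt (u2 x) - m2|^2) = ∫ x in Ω, (Real.sqrt (u2 x) - m2)^2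
            from congΩ _ _ fun x _ => sq_abs _] at hcs
        have hP1s : Real.sqrt (∫ x in Ω, (Real.sqrt (u1 x) - m1)^2) ≤ Real.sqrt (E*(g₀/d1)) :=
          Real.sqrt_le_sqrt hPL1g
        have hP2s : Real.sqrt (∫ x in Ω, (Real.sqrt (u2 x) - m2)^2) ≤ Real.sqrt (E*(g₀/e2)) :=
          Real.sqrt_le_sqrt hPL2g
        have hEβ1 : E*(g₀/d1) ≤ β := by
          calc E*(g₀/d1) ≤ E*((β*d1/E)/d1) :=
                mul_le_mul_of_nonneg_left ((div_le_div_iff_of_pos_right hd1).2 hgd) hE.le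
            _ = β := by
                field_simp
        have hEβ2 : E*(g₀/e2) ≤ β := by
          calc E*(g₀/e2) ≤ E*((β*e2/E)/e2) :=
                mul_le_mul_of_nonneg_left ((div_le_div_iff_of_pos_right he2).2 hge) hE.le
            _ = β := by
                field_simp
        have hprod : Real.sqrt (E*(g₀/d1)) * Real.sqrt (E*(g₀/e2)) ≤ β := by
          have hsa := Real.sq_sqrt (mul_nonneg hE.le (div_nonneg hg₀.le hd1.le))
          have hsb := Real.sq_sqrt (mul_nonneg hE.le (div_nonneg hg₀.le he2.le))
          have hab : 2*(Real.sqrt (E*(g₀/d1)) * Real.sqrt (E*(g₀/e2)))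
              ≤ Real.sqrt (E*(g₀/d1))^2 + Real.sqrt (E*(g₀/e2))^2 := by
            nlinarith only [sq_nonneg (Real.sqrt (E*(g₀/d1)) - Real.sqrt (E*(g₀/e2)))]
          linarith only [hsa, hsb, hab, hEβ1, hEβ2]
        have hfin : ∫ x in Ω, |Real.sqrt (u1 x) - m1| * |Real.sqrt (u2 x) - m2| ≤ β :=
          hcs.trans ((mul_le_mul hP1s hP2s (Real.sqrt_nonneg _) (Real.sqrt_nonneg _)).trans hprod)
        linarith only [hneg, hfin]
      -- ∫ U1 U2 is at least β
      have iU1U2 : Integrable (fun x => Real.sqrt (u1 x)*Real.sqrt (u2 x))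
          (volume.restrict Ω) := intB _ (mU1.mul mU2) (bddMul bU1 bU2)
      have iU3U4 : Integrable (fun x => Real.sqrt (u3 x)*Real.sqrt (u4 x))
          (volume.restrict Ω) := intB _ (mU3.mul mU4) (bddMul bU3 bU4)
      have hexp := integral_mul_expand (μ := volume.restrict Ω) iU1 iU2 iU1U2 m1 m2
      rw [hJ1, hJ2, hμuniv] at hexp
      have hsplitlow : β ≤ ∫ x in Ω, Real.sqrt (u1 x)*Real.sqrt (u2 x) := by
        linarith only [hexp, hcross, hVm1m2]
      -- ∫ U1 U2 splits as ∫ δ + ∫ U3 U4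
      have iδf : Integrable (fun x => Real.sqrt (u1 x)*Real.sqrt (u2 x)
          - Real.sqrt (u3 x)*Real.sqrt (u4 x)) (volume.restrict Ω) := iU1U2.sub iU3U4
      have hsplit : ∫ x in Ω, Real.sqrt (u1 x)*Real.sqrt (u2 x)
          = (∫ x in Ω, (Real.sqrt (u1 x)*Real.sqrt (u2 x) - Real.sqrt (u3 x)*Real.sqrt (u4 x)))
            + ∫ x in Ω, Real.sqrt (u3 x)*Real.sqrt (u4 x) := by
        rw [← integral_add iδf iU3U4]
        exact congΩ _ _ fun x _ => by ring
      -- bound on ∫ δ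
      have iabsδ : Integrable (fun x => |Real.sqrt (u1 x)*Real.sqrt (u2 x)
          - Real.sqrt (u3 x)*Real.sqrt (u4 x)|) (volume.restrict Ω) :=
        intB _ (((mU1.mul mU2).sub (mU3.mul mU4)).abs)
          (bddAbs (bddSub2 (bddMul bU1 bU2) (bddMul bU3 bU4)))
      have hδ1 : ∫ x in Ω, (Real.sqrt (u1 x)*Real.sqrt (u2 x)
            - Real.sqrt (u3 x)*Real.sqrt (u4 x))
          ≤ ∫ x in Ω, |Real.sqrt (u1 x)*Real.sqrt (u2 x) - Real.sqrt (u3 x)*Real.sqrt (u4 x)| :=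
        setIntegral_mono_on iδf iabsδ hΩm fun x _ => le_abs_self _
      have hδcs := csΩ (fun x => |Real.sqrt (u1 x)*Real.sqrt (u2 x)
          - Real.sqrt (u3 x)*Real.sqrt (u4 x)|) (fun _ => (1:ℝ))
        (((mU1.mul mU2).sub (mU3.mul mU4)).abs) measurable_const
        (bddAbs (bddSub2 (bddMul bU1 bU2) (bddMul bU3 bU4))) ⟨1, fun x _ => by norm_num⟩
        (fun x => abs_nonneg _) (fun x => zero_le_one)
      rw [congΩ _ _ (fun x _ => mul_one _),
        show (∫ x in Ω, |Real.sqrt (u1 x)*Real.sqrt (u2 x)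
            - Real.sqrt (u3 x)*Real.sqrt (u4 x)|^2) = Iδ from by
          rw [congΩ _ _ fun x _ => sq_abs _, ← hIδdef],
        show (∫ x in Ω, ((1:ℝ))^2) = V from by
          rw [congΩ _ _ fun x _ => one_pow 2, setIntegral_const, smul_eq_mul, mul_one, measureReal_def, ← hVdef]]
        at hδcs
      have hIδg : Iδ ≤ g₀/e4 := hIδG.trans ((div_le_div_iff_of_pos_right he4).2 hcase.le)
      have hδ2 : Real.sqrt Iδ * Real.sqrt V ≤ β/4 := by
        have h1 : Real.sqrt Iδ ≤ Real.sqrt (g₀/e4) := Real.sqrt_le_sqrt hIδg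
        have h2 : Real.sqrt (g₀/e4) * Real.sqrt V = Real.sqrt ((g₀/e4)*V) :=
          (Real.sqrt_mul (div_nonneg hg₀.le he4.le) V).symm
        have h3' : (g₀/e4)*V ≤ β^2/16 := by
          calc (g₀/e4)*V ≤ ((β^2*e4/(16*V))/e4)*V :=
                mul_le_mul_of_nonneg_right ((div_le_div_iff_of_pos_right he4).2 hgf) hV.le
            _ = β^2/16 := by
                field_simp
        calc Real.sqrt Iδ * Real.sqrt V ≤ Real.sqrt (g₀/e4) * Real.sqrt V :=
              mul_le_mul_of_nonneg_right h1 (Real.sqrt_nonneg _)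
          _ = Real.sqrt ((g₀/e4)*V) := h2
          _ ≤ Real.sqrt (β^2/16) := Real.sqrt_le_sqrt h3'
          _ = β/4 := by
              rw [show β^2/16 = (β/4)^2 by ring, Real.sqrt_sq (by linarith only [hβ])]
      -- bound on ∫ U3 U4
      have hcs34 := csΩ (fun x => Real.sqrt (u3 x)) (fun x => Real.sqrt (u4 x)) mU3 mU4 bU3 bU4
        (fun x => Real.sqrt_nonneg _) (fun x => Real.sqrt_nonneg _)
      rw [hsq3, hsq4] at hcs34
      have hQ4M : ∫ x in Ω, u4 x ≤ M14 := by linarith only [hmass14, hiu1]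
      have h34 : ∫ x in Ω, Real.sqrt (u3 x)*Real.sqrt (u4 x) ≤ β/4 := by
        have h1 : Real.sqrt (∫ x in Ω, u3 x) ≤ Real.sqrt ε₀ := Real.sqrt_le_sqrt h3.le
        have h2 : Real.sqrt (∫ x in Ω, u4 x) ≤ Real.sqrt M14 := Real.sqrt_le_sqrt hQ4M
        have h4 : Real.sqrt ε₀ * Real.sqrt M14 = Real.sqrt (ε₀*M14) :=
          (Real.sqrt_mul hε.le M14).symm
        have h5 : ε₀*M14 ≤ β^2/16 := by
          calc ε₀*M14 ≤ (β^2/(16*M14))*M14 := mul_le_mul_of_nonneg_right hε3 hM14.le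
            _ = β^2/16 := by
                field_simp
        calc ∫ x in Ω, Real.sqrt (u3 x)*Real.sqrt (u4 x)
            ≤ Real.sqrt (∫ x in Ω, u3 x) * Real.sqrt (∫ x in Ω, u4 x) := hcs34
          _ ≤ Real.sqrt ε₀ * Real.sqrt M14 :=
              mul_le_mul h1 h2 (Real.sqrt_nonneg _) (Real.sqrt_nonneg _)
          _ = Real.sqrt (ε₀*M14) := h4
          _ ≤ Real.sqrt (β^2/16) := Real.sqrt_le_sqrt h5
          _ = β/4 := by
              rw [show β^2/16 = (β/4)^2 by ring, Real.sqrt_sq (by linarith only [hβ])]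
      linarith only [hsplitlow, hsplit, hδ1, hδcs, hδ2, h34, hβ]
end

section
/- Let Omega ⊂ R^N be a measurable set with finite positive Lebesgue measure |Omega|, and let u_{1,∞}, u_{2,∞}, u_{3,∞}, u_{4,∞} > 0 be constants. Then there exists a constant C > 0, depending only on |Omega| and the constants u_{i,∞}, such that for all bounded nonnegative measurable functions u1, u2, u3, u4 on Omega: sum_{i=1}^4 ∫_Omega ( u_i log(u_i/u_{i,∞}) - u_i + u_{i,∞} ) dx <= C * (1 + max_{i=1..4} log(||u_i||_{L^∞(Omega)} + 1)) * ( sum_{i=1}^4 ||U_i - Ū_i||_{L^2(Omega)}^2 + |Omega| * sum_{i=1}^4 | sqrt( (1/|Omega|)∫_Omega u_i dx ) - sqrt(u_{i,∞}) |^2 ), where U_i := sqrt(u_i) and Ū_i := (1/|Omega|)∫_Omega U_i dx, with the convention 0*log 0 = 0. -/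
open MeasureTheory Real ENNReal

private 
lemma key_pointwise {a c M : ℝ} (ha : 0 ≤ a) (haM : a ≤ M) (hc : 0 < c) :
    a * Real.log (a / c) - a + c ≤
      (4 + |Real.log c|) * (1 + Real.log (M + 1)) * (Real.sqrt a - Real.sqrt c) ^ 2 := by
  have hM0 : 0 ≤ M := le_trans ha haM
  set q := Real.sqrt c with hqdef
  have hq0 : 0 < q := Real.sqrt_pos.2 hc
  have hqc : q ^ 2 = c := Real.sq_sqrt hc.le
  have hsq : (0:ℝ) ≤ (Real.sqrt a - q) ^ 2 := sq_nonneg _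
  have hlogM1 : 0 ≤ Real.log (M + 1) := Real.log_nonneg (by linarith)
  have hK0 : 4 + max 0 (Real.log (M / c)) ≤ (4 + |Real.log c|) * (1 + Real.log (M + 1)) := by
    have h1 : Real.log (M / c) ≤ Real.log (M + 1) + |Real.log c| := by
      rcases eq_or_lt_of_le hM0 with h | h
      · rw [← h]
        simp only [zero_div, Real.log_zero]
        positivity
      · rw [Real.log_div (ne_of_gt h) hc.ne']
        have h2 : Real.log M ≤ Real.log (M + 1) := Real.log_le_log h (by linarith)
        linarith [neg_abs_le (Real.log c)]
    have h2 : max 0 (Real.log (M / c)) ≤ Real.log (M + 1) + |Real.log c| :=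
      max_le (by positivity) h1
    nlinarith [abs_nonneg (Real.log c)]
  refine le_trans ?_ (mul_le_mul_of_nonneg_right hK0 hsq)
  rcases eq_or_lt_of_le ha with h0 | hapos
  · rw [← h0]
    simp [Real.sqrt_zero]
    nlinarith [le_max_left (0:ℝ) (Real.log (M / c))]
  · set p := Real.sqrt a with hpdef
    have hp0 : 0 < p := Real.sqrt_pos.2 hapos
    have hpa : p ^ 2 = a := Real.sq_sqrt ha
    have hlog_ratio : Real.log (a / c) = 2 * Real.log (p / q) := by
      rw [show a / c = (p / q) ^ 2 by rw [div_pow, hpa, hqc], Real.log_pow]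
      push_cast; ring
    have hlpq : Real.log (p / q) ≤ (p - q) / q := by
      have h := Real.log_le_sub_one_of_pos (div_pos hp0 hq0)
      rwa [div_sub_one hq0.ne'] at h
    rcases le_or_gt a c with hac | hca
    · -- a ≤ c
      have hpq : p ≤ q := Real.sqrt_le_sqrt hac
      have h2 : a * Real.log (a / c) ≤ 2 * p ^ 2 * ((p - q) / q) := by
        rw [hlog_ratio, ← hpa]
        nlinarith [mul_le_mul_of_nonneg_left hlpq (sq_nonneg p)]
      have h3 : 2 * p ^ 2 * ((p - q) / q) ≤ 4 * (p - q) ^ 2 + p ^ 2 - q ^ 2 := by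
        rw [show 2 * p ^ 2 * ((p - q) / q) = (2 * p ^ 2 * (p - q)) / q by ring,
          div_le_iff₀ hq0]
        nlinarith [mul_nonneg (sq_nonneg (q - p)) (by linarith : (0:ℝ) ≤ 3 * q - 2 * p)]
      have h4 : a * Real.log (a / c) - a + c ≤ 4 * (p - q) ^ 2 := by
        have := hpa; have := hqc; linarith
      nlinarith [le_max_left (0:ℝ) (Real.log (M / c))]
    · -- c < a
      have hqp : q ≤ p := Real.sqrt_le_sqrt hca.le
      have hac1 : (1:ℝ) ≤ a / c := (one_le_div hc).2 hca.le
      have hL0 : Real.log (a / c) ≤ max 0 (Real.log (M / c)) :=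
        le_max_of_le_right (Real.log_le_log (by positivity) (by gcongr))
      have hE1 : a * Real.log (a / c) - a + c ≤ (a - c) * Real.log (a / c) := by
        have h := Real.log_le_sub_one_of_pos (show (0:ℝ) < a / c by positivity)
        have h2 := mul_le_mul_of_nonneg_left h hc.le
        have h3 : c * (a / c - 1) = a - c := by field_simp
        nlinarith
      have hterm1 : (p - q) ^ 2 * Real.log (a / c) ≤ (p - q) ^ 2 * max 0 (Real.log (M / c)) :=
        mul_le_mul_of_nonneg_left hL0 (sq_nonneg _)
      have hterm2 : 2 * q * (p - q) * Real.log (a / c) ≤ 4 * (p - q) ^ 2 := by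
        rw [hlog_ratio]
        have hn : 0 ≤ 2 * q * (p - q) := by nlinarith
        calc 2 * q * (p - q) * (2 * Real.log (p / q))
            ≤ 2 * q * (p - q) * (2 * ((p - q) / q)) :=
              mul_le_mul_of_nonneg_left (by linarith) hn
          _ = 4 * (p - q) ^ 2 := by field_simp; ring
      have hsplit : (a - c) * Real.log (a / c)
          = (p - q) ^ 2 * Real.log (a / c) + 2 * q * (p - q) * Real.log (a / c) := by
        rw [← hpa, ← hqc]; ring
      have hexp : (4 + max 0 (Real.log (M / c))) * (p - q) ^ 2
          = 4 * (p - q) ^ 2 + (p - q) ^ 2 * max 0 (Real.log (M / c)) := by ring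
      linarith

private 
lemma abs_entropy_bound {a c M : ℝ} (ha : 0 ≤ a) (haM : a ≤ M) (hc : 0 < c) :
    |a * Real.log (a / c) - a + c| ≤ M ^ 2 / c + M + 2 * c := by
  have hM0 : 0 ≤ M := le_trans ha haM
  have key : |a * Real.log (a / c)| ≤ c + a ^ 2 / c := by
    rcases eq_or_lt_of_le ha with h0 | hapos
    · rw [← h0]; simp; positivity
    · set x := a / c with hx
      have hx0 : 0 < x := by positivity
      have hup : Real.log x ≤ x - 1 := Real.log_le_sub_one_of_pos hx0
      have hlow : 1 - 1 / x ≤ Real.log x := by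
        have h := Real.log_le_sub_one_of_pos (show (0:ℝ) < 1 / x by positivity)
        rw [Real.log_div one_ne_zero hx0.ne', Real.log_one] at h
        linarith
      have h1 : a * Real.log x ≤ a * (x - 1) := by nlinarith
      have h2 : a * (1 - 1 / x) ≤ a * Real.log x := by nlinarith
      have hax : a * (1 / x) = c := by rw [hx]; field_simp
      have h2exp : a * (1 - 1 / x) = a - c := by rw [mul_sub, hax, mul_one]
      have hd : 0 ≤ a ^ 2 / c := by positivity
      rw [abs_le]
      constructor
      · nlinarith
      · have : a * x = a ^ 2 / c := by rw [hx]; ring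
        nlinarith
  rw [abs_le] at key ⊢
  have h3 : a ^ 2 ≤ M ^ 2 := by nlinarith
  have h4 : a ^ 2 / c ≤ M ^ 2 / c := by gcongr
  constructor <;> nlinarith

private lemma species {α : Type*} [MeasurableSpace α] (μ : Measure α) [IsFiniteMeasure μ]
    (hm : 0 < (μ Set.univ).toReal)
    (u : α → ℝ) (hu : Measurable u)
    {c M : ℝ} (hc : 0 < c)
    (hb : ∀ᵐ x ∂μ, 0 ≤ u x ∧ u x ≤ M) :
    ∫ x, (u x * Real.log (u x / c) - u x + c) ∂μ ≤
      (4 + |Real.log c|) * (1 + Real.log (M + 1)) *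
        (3 * ∫ x, (Real.sqrt (u x) - ⨍ y, Real.sqrt (u y) ∂μ) ^ 2 ∂μ
          + 2 * (μ Set.univ).toReal * (Real.sqrt (⨍ x, u x ∂μ) - Real.sqrt c) ^ 2) := by
  haveI : (ae μ).NeBot := by
    refine ae_neBot.2 fun h => ?_
    rw [h] at hm; simp at hm
  obtain ⟨x0, hx01, hx02⟩ := hb.exists
  have hM0 : 0 ≤ M := le_trans hx01 hx02
  set m := (μ Set.univ).toReal with hmdef
  have hmne : m ≠ 0 := ne_of_gt hm
  have hV : Measurable fun x => Real.sqrt (u x) := hu.sqrt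
  -- integrability
  have int_u : Integrable u μ := by
    refine Integrable.mono' (integrable_const M) hu.aestronglyMeasurable ?_
    filter_upwards [hb] with x hx
    rw [Real.norm_eq_abs, abs_of_nonneg hx.1]; exact hx.2
  have int_V : Integrable (fun x => Real.sqrt (u x)) μ := by
    refine Integrable.mono' (integrable_const (Real.sqrt M)) hV.aestronglyMeasurable ?_
    filter_upwards [hb] with x hx
    rw [Real.norm_eq_abs, abs_of_nonneg (Real.sqrt_nonneg _)]
    exact Real.sqrt_le_sqrt hx.2
  have int_sq : ∀ t : ℝ, Integrable (fun x => (Real.sqrt (u x) - t) ^ 2) μ := by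
    intro t
    refine Integrable.mono' (integrable_const ((Real.sqrt M + |t|) ^ 2))
      ((hV.sub_const t).pow_const 2).aestronglyMeasurable ?_
    filter_upwards [hb] with x hx
    rw [Real.norm_eq_abs, abs_of_nonneg (sq_nonneg _)]
    have h3 : Real.sqrt (u x) ≤ Real.sqrt M := Real.sqrt_le_sqrt hx.2
    have h4 : 0 ≤ Real.sqrt (u x) := Real.sqrt_nonneg _
    nlinarith [abs_nonneg t, neg_abs_le t, le_abs_self t, Real.sqrt_nonneg M]
  have int_V2 : Integrable (fun x => Real.sqrt (u x) ^ 2) μ := by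
    have := int_sq 0; simpa using this
  have int_f : Integrable (fun x => u x * Real.log (u x / c) - u x + c) μ := by
    refine Integrable.mono' (integrable_const (M ^ 2 / c + M + 2 * c))
      (((hu.mul (Real.measurable_log.comp (hu.div_const c))).sub hu).add_const
        c).aestronglyMeasurable ?_
    filter_upwards [hb] with x hx
    rw [Real.norm_eq_abs]
    exact abs_entropy_bound hx.1 hx.2 hc
  -- notation
  set b := ⨍ y, Real.sqrt (u y) ∂μ with hbdef
  set A := ⨍ x, u x ∂μ with hAdef
  have hIV : ∫ x, Real.sqrt (u x) ∂μ = m * b := by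
    rw [hbdef, average_eq, smul_eq_mul, measureReal_def, ← hmdef]
    field_simp
  have hIU : ∫ x, u x ∂μ = m * A := by
    rw [hAdef, average_eq, smul_eq_mul, measureReal_def, ← hmdef]
    field_simp
  have hIV2 : ∫ x, Real.sqrt (u x) ^ 2 ∂μ = m * A := by
    rw [← hIU]
    refine integral_congr_ae ?_
    filter_upwards [hb] with x hx
    exact Real.sq_sqrt hx.1
  have expansion : ∀ t : ℝ, ∫ x, (Real.sqrt (u x) - t) ^ 2 ∂μ
      = m * A - 2 * t * (m * b) + m * t ^ 2 := by
    intro t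
    have heq : (fun x => (Real.sqrt (u x) - t) ^ 2)
        = fun x => Real.sqrt (u x) ^ 2 - (2 * t) * Real.sqrt (u x) + t ^ 2 := by
      funext x; ring
    have ih : Integrable (fun x => Real.sqrt (u x) ^ 2 - 2 * t * Real.sqrt (u x)) μ := by
      exact int_V2.sub (int_V.const_mul (2 * t))
    have ih2 : Integrable (fun x => 2 * t * Real.sqrt (u x)) μ := by
      exact int_V.const_mul (2 * t)
    rw [heq, integral_add ih (integrable_const _),
      integral_sub int_V2 ih2, integral_const_mul, hIV2, hIV,
      integral_const, smul_eq_mul, measureReal_def, ← hmdef]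
  have E2 : ∫ x, (Real.sqrt (u x) - b) ^ 2 ∂μ = m * (A - b ^ 2) := by
    rw [expansion b]; ring
  have E3 : 0 ≤ ∫ x, (Real.sqrt (u x) - b) ^ 2 ∂μ := integral_nonneg fun x => sq_nonneg _
  have hAb2 : b ^ 2 ≤ A := by nlinarith [E2, E3]
  have hb0 : 0 ≤ b := by
    rw [hbdef, average_eq, smul_eq_mul]
    have : 0 ≤ ∫ y, Real.sqrt (u y) ∂μ := integral_nonneg fun y => Real.sqrt_nonneg _
    positivity
  have hA0 : 0 ≤ A := le_trans (sq_nonneg b) hAb2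
  have hsA : Real.sqrt A ^ 2 = A := Real.sq_sqrt hA0
  have hbs : b ≤ Real.sqrt A := by nlinarith [Real.sqrt_nonneg A]
  -- main estimate
  set K := (4 + |Real.log c|) * (1 + Real.log (M + 1)) with hKdef
  have hK0 : 0 ≤ K := by
    have h1 : 0 ≤ Real.log (M + 1) := Real.log_nonneg (by linarith)
    have h2 : 0 ≤ |Real.log c| := abs_nonneg _
    positivity
  have step1 : ∫ x, (u x * Real.log (u x / c) - u x + c) ∂μ
      ≤ K * ∫ x, (Real.sqrt (u x) - Real.sqrt c) ^ 2 ∂μ := by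
    rw [← integral_const_mul]
    refine integral_mono_ae int_f ((int_sq _).const_mul K) ?_
    filter_upwards [hb] with x hx
    exact key_pointwise hx.1 hx.2 hc
  have step2 : ∫ x, (Real.sqrt (u x) - Real.sqrt c) ^ 2 ∂μ
      ≤ 3 * ∫ x, (Real.sqrt (u x) - b) ^ 2 ∂μ
        + 2 * m * (Real.sqrt A - Real.sqrt c) ^ 2 := by
    rw [expansion (Real.sqrt c), E2]
    have hqc : Real.sqrt c ^ 2 = c := Real.sq_sqrt hc.le
    nlinarith [sq_nonneg (b - 2 * Real.sqrt A + Real.sqrt c),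
      mul_nonneg hb0 (sub_nonneg.2 hbs), hm.le, sq_nonneg (Real.sqrt A - b),
      mul_le_mul_of_nonneg_left (show (Real.sqrt A - b) ^ 2 ≤ A - b ^ 2 by
        nlinarith [mul_nonneg hb0 (sub_nonneg.2 hbs)]) hm.le]
  calc ∫ x, (u x * Real.log (u x / c) - u x + c) ∂μ
      ≤ K * ∫ x, (Real.sqrt (u x) - Real.sqrt c) ^ 2 ∂μ := step1
    _ ≤ K * (3 * ∫ x, (Real.sqrt (u x) - b) ^ 2 ∂μ
        + 2 * m * (Real.sqrt A - Real.sqrt c) ^ 2) :=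
      mul_le_mul_of_nonneg_left step2 hK0

private lemma term_bound {Kmax Lmax m Ki Li Di Si Ei : ℝ}
    (hE : Ei ≤ Ki * (1 + Li) * (3 * Di + 2 * m * Si))
    (h1 : 0 ≤ Ki) (h2 : Ki ≤ Kmax) (h3 : 0 ≤ Li) (h4 : Li ≤ Lmax)
    (h5 : 0 ≤ Di) (h6 : 0 ≤ Si) (hm : 0 ≤ m) :
    Ei ≤ Kmax * (1 + Lmax) * (3 * Di + 3 * m * Si) := by
  have hmS : (0:ℝ) ≤ m * Si := mul_nonneg hm h6
  have hX : (0:ℝ) ≤ 3 * Di + 2 * m * Si := by nlinarith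
  have hKL : Ki * (1 + Li) ≤ Kmax * (1 + Lmax) :=
    mul_le_mul h2 (by linarith) (by linarith) (by linarith)
  have h7 : (0:ℝ) ≤ Kmax * (1 + Lmax) := mul_nonneg (by linarith) (by linarith)
  calc Ei ≤ Ki * (1 + Li) * (3 * Di + 2 * m * Si) := hE
    _ ≤ Kmax * (1 + Lmax) * (3 * Di + 2 * m * Si) := mul_le_mul_of_nonneg_right hKL hX
    _ ≤ Kmax * (1 + Lmax) * (3 * Di + 3 * m * Si) := by nlinarith

private lemma combine {Kmax Lmax m K1 K2 K3 K4 L1 L2 L3 L4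
    D1 D2 D3 D4 S1 S2 S3 S4 E1 E2 E3 E4 : ℝ}
    (hm : 0 ≤ m)
    (hK1 : 0 ≤ K1) (hK1' : K1 ≤ Kmax) (hK2 : 0 ≤ K2) (hK2' : K2 ≤ Kmax)
    (hK3 : 0 ≤ K3) (hK3' : K3 ≤ Kmax) (hK4 : 0 ≤ K4) (hK4' : K4 ≤ Kmax)
    (hL1 : 0 ≤ L1) (hL1' : L1 ≤ Lmax) (hL2 : 0 ≤ L2) (hL2' : L2 ≤ Lmax)
    (hL3 : 0 ≤ L3) (hL3' : L3 ≤ Lmax) (hL4 : 0 ≤ L4) (hL4' : L4 ≤ Lmax)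
    (hD1 : 0 ≤ D1) (hD2 : 0 ≤ D2) (hD3 : 0 ≤ D3) (hD4 : 0 ≤ D4)
    (hS1 : 0 ≤ S1) (hS2 : 0 ≤ S2) (hS3 : 0 ≤ S3) (hS4 : 0 ≤ S4)
    (hE1 : E1 ≤ K1 * (1 + L1) * (3 * D1 + 2 * m * S1))
    (hE2 : E2 ≤ K2 * (1 + L2) * (3 * D2 + 2 * m * S2))
    (hE3 : E3 ≤ K3 * (1 + L3) * (3 * D3 + 2 * m * S3))
    (hE4 : E4 ≤ K4 * (1 + L4) * (3 * D4 + 2 * m * S4)) :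
    E1 + E2 + E3 + E4 ≤
      3 * Kmax * (1 + Lmax) * (D1 + D2 + D3 + D4 + m * (S1 + S2 + S3 + S4)) := by
  have t1 := term_bound hE1 hK1 hK1' hL1 hL1' hD1 hS1 hm
  have t2 := term_bound hE2 hK2 hK2' hL2 hL2' hD2 hS2 hm
  have t3 := term_bound hE3 hK3 hK3' hL3 hL3' hD3 hS3 hm
  have t4 := term_bound hE4 hK4 hK4' hL4 hL4' hD4 hS4 hm
  have hsum : Kmax * (1 + Lmax) * (3 * D1 + 3 * m * S1)
      + Kmax * (1 + Lmax) * (3 * D2 + 3 * m * S2)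
      + Kmax * (1 + Lmax) * (3 * D3 + 3 * m * S3)
      + Kmax * (1 + Lmax) * (3 * D4 + 3 * m * S4)
      = 3 * Kmax * (1 + Lmax) * (D1 + D2 + D3 + D4 + m * (S1 + S2 + S3 + S4)) := by ring
  linarith

/-- Upper bound for the relative entropy `H(u|u_∞)` by the `L²` deviations of the square
roots from their averages plus the deviation of the averaged masses from equilibrium. -/
theorem relative_entropy_upper_bound
    (N : ℕ) (Ω : Set (EuclideanSpace ℝ (Fin N)))
    (hΩ : MeasurableSet Ω) (hΩpos : 0 < volume Ω) (hΩfin : volume Ω < ⊤)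
    (c1 c2 c3 c4 : ℝ) (hc1 : 0 < c1) (hc2 : 0 < c2) (hc3 : 0 < c3) (hc4 : 0 < c4) :
    ∃ C : ℝ, 0 < C ∧
      ∀ u1 u2 u3 u4 : EuclideanSpace ℝ (Fin N) → ℝ,
        Measurable u1 → Measurable u2 → Measurable u3 → Measurable u4 →
        (∀ x ∈ Ω, 0 ≤ u1 x) → (∀ x ∈ Ω, 0 ≤ u2 x) →
        (∀ x ∈ Ω, 0 ≤ u3 x) → (∀ x ∈ Ω, 0 ≤ u4 x) →
        eLpNorm u1 ⊤ (volume.restrict Ω) < ⊤ →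
        eLpNorm u2 ⊤ (volume.restrict Ω) < ⊤ →
        eLpNorm u3 ⊤ (volume.restrict Ω) < ⊤ →
        eLpNorm u4 ⊤ (volume.restrict Ω) < ⊤ →
        (∫ x in Ω, (u1 x * Real.log (u1 x / c1) - u1 x + c1))
          + (∫ x in Ω, (u2 x * Real.log (u2 x / c2) - u2 x + c2))
          + (∫ x in Ω, (u3 x * Real.log (u3 x / c3) - u3 x + c3))
          + (∫ x in Ω, (u4 x * Real.log (u4 x / c4) - u4 x + c4))
        ≤ C * (1 + max (max (max
              (Real.log ((eLpNorm u1 ⊤ (volume.restrict Ω)).toReal + 1))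
              (Real.log ((eLpNorm u2 ⊤ (volume.restrict Ω)).toReal + 1)))
              (Real.log ((eLpNorm u3 ⊤ (volume.restrict Ω)).toReal + 1)))
              (Real.log ((eLpNorm u4 ⊤ (volume.restrict Ω)).toReal + 1)))
          * ((∫ x in Ω, (Real.sqrt (u1 x) - ⨍ y in Ω, Real.sqrt (u1 y)) ^ 2)
            + (∫ x in Ω, (Real.sqrt (u2 x) - ⨍ y in Ω, Real.sqrt (u2 y)) ^ 2)
            + (∫ x in Ω, (Real.sqrt (u3 x) - ⨍ y in Ω, Real.sqrt (u3 y)) ^ 2)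
            + (∫ x in Ω, (Real.sqrt (u4 x) - ⨍ y in Ω, Real.sqrt (u4 y)) ^ 2)
            + (volume Ω).toReal *
              ((Real.sqrt (⨍ x in Ω, u1 x) - Real.sqrt c1) ^ 2
                + (Real.sqrt (⨍ x in Ω, u2 x) - Real.sqrt c2) ^ 2
                + (Real.sqrt (⨍ x in Ω, u3 x) - Real.sqrt c3) ^ 2
                + (Real.sqrt (⨍ x in Ω, u4 x) - Real.sqrt c4) ^ 2)) := by
  have hK1 : 4 + |Real.log c1| ≤
      max (max (max (4 + |Real.log c1|) (4 + |Real.log c2|)) (4 + |Real.log c3|))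
        (4 + |Real.log c4|) := le_max_of_le_left (le_max_of_le_left (le_max_left _ _))
  have hK2 : 4 + |Real.log c2| ≤
      max (max (max (4 + |Real.log c1|) (4 + |Real.log c2|)) (4 + |Real.log c3|))
        (4 + |Real.log c4|) := le_max_of_le_left (le_max_of_le_left (le_max_right _ _))
  have hK3 : 4 + |Real.log c3| ≤
      max (max (max (4 + |Real.log c1|) (4 + |Real.log c2|)) (4 + |Real.log c3|))
        (4 + |Real.log c4|) := le_max_of_le_left (le_max_right _ _)
  have hK4 : 4 + |Real.log c4| ≤
      max (max (max (4 + |Real.log c1|) (4 + |Real.log c2|)) (4 + |Real.log c3|))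
        (4 + |Real.log c4|) := le_max_right _ _
  have hKmax0 : 0 < max (max (max (4 + |Real.log c1|) (4 + |Real.log c2|))
      (4 + |Real.log c3|)) (4 + |Real.log c4|) :=
    lt_of_lt_of_le (by positivity) hK1
  refine ⟨3 * max (max (max (4 + |Real.log c1|) (4 + |Real.log c2|)) (4 + |Real.log c3|))
      (4 + |Real.log c4|), by linarith, ?_⟩
  intro u1 u2 u3 u4 hu1 hu2 hu3 hu4 hn1 hn2 hn3 hn4 he1 he2 he3 he4
  haveI : IsFiniteMeasure (volume.restrict Ω : Measure (EuclideanSpace ℝ (Fin N))) :=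
    ⟨by rwa [Measure.restrict_apply_univ]⟩
  have hm : 0 < ((volume.restrict Ω : Measure (EuclideanSpace ℝ (Fin N))) Set.univ).toReal := by
    rw [Measure.restrict_apply_univ]
    exact ENNReal.toReal_pos hΩpos.ne' hΩfin.ne
  have hbnd : ∀ u : EuclideanSpace ℝ (Fin N) → ℝ, (∀ x ∈ Ω, 0 ≤ u x) →
      eLpNorm u ⊤ (volume.restrict Ω) < ⊤ →
      ∀ᵐ x ∂(volume.restrict Ω), 0 ≤ u x ∧ u x ≤ (eLpNorm u ⊤ (volume.restrict Ω)).toReal := by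
    intro u hn he
    have h1 : ∀ᵐ x ∂(volume.restrict Ω), 0 ≤ u x := ae_restrict_of_forall_mem hΩ hn
    have h2 := enorm_ae_le_eLpNormEssSup u (volume.restrict Ω)
    filter_upwards [h1, h2] with x hx1 hx2
    refine ⟨hx1, ?_⟩
    have h3 : ((‖u x‖₊ : ENNReal)).toReal ≤ (eLpNormEssSup u (volume.restrict Ω)).toReal := by
      refine ENNReal.toReal_mono ?_ hx2
      rw [← eLpNorm_exponent_top]; exact he.ne
    rw [ENNReal.coe_toReal, coe_nnnorm, Real.norm_eq_abs] at h3
    calc u x ≤ |u x| := le_abs_self _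
      _ ≤ (eLpNormEssSup u (volume.restrict Ω)).toReal := h3
      _ = (eLpNorm u ⊤ (volume.restrict Ω)).toReal := by rw [← eLpNorm_exponent_top]
  have s1 := species (volume.restrict Ω) hm u1 hu1 hc1 (hbnd u1 hn1 he1)
  have s2 := species (volume.restrict Ω) hm u2 hu2 hc2 (hbnd u2 hn2 he2)
  have s3 := species (volume.restrict Ω) hm u3 hu3 hc3 (hbnd u3 hn3 he3)
  have s4 := species (volume.restrict Ω) hm u4 hu4 hc4 (hbnd u4 hn4 he4)
  rw [Measure.restrict_apply_univ] at s1 s2 s3 s4 hm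
  refine combine hm.le
    (by positivity) hK1 (by positivity) hK2 (by positivity) hK3 (by positivity) hK4
    (Real.log_nonneg (by linarith [ENNReal.toReal_nonneg (a := eLpNorm u1 ⊤ (volume.restrict Ω))]))
    (le_max_of_le_left (le_max_of_le_left (le_max_left _ _)))
    (Real.log_nonneg (by linarith [ENNReal.toReal_nonneg (a := eLpNorm u2 ⊤ (volume.restrict Ω))]))
    (le_max_of_le_left (le_max_of_le_left (le_max_right _ _)))
    (Real.log_nonneg (by linarith [ENNReal.toReal_nonneg (a := eLpNorm u3 ⊤ (volume.restrict Ω))]))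
    (le_max_of_le_left (le_max_right _ _))
    (Real.log_nonneg (by linarith [ENNReal.toReal_nonneg (a := eLpNorm u4 ⊤ (volume.restrict Ω))]))
    (le_max_right _ _)
    (integral_nonneg fun x => sq_nonneg _) (integral_nonneg fun x => sq_nonneg _)
    (integral_nonneg fun x => sq_nonneg _) (integral_nonneg fun x => sq_nonneg _)
    (sq_nonneg _) (sq_nonneg _) (sq_nonneg _) (sq_nonneg _)
    s1 s2 s3 s4
end

section
/- Let kappa > 0, r in (0,1), let beta : [0,∞) → [0,∞) be continuous, and let y : [0,∞) → [0,∞) be differentiable with y'(t) <= beta(t) + kappa * y(t)^{1-r} for all t > 0. Then there exists a constant C > 0, depending only on kappa and r, such that y(t) <= C * ( y(0) + ∫_0^t beta(s) ds + t^{1/r} ) for all t > 0. -/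
open MeasureTheory Set

private lemma rpow_add_le_aux (A B p : ℝ) (hA : 0 ≤ A) (hB : 0 ≤ B) (hp : 0 ≤ p) :
    (A + B) ^ p ≤ 2 ^ p * (A ^ p + B ^ p) := by
  have h2 : (0:ℝ) ≤ (2:ℝ) ^ p := Real.rpow_nonneg (by norm_num) p
  rcases le_total A B with h | h
  · calc (A + B) ^ p ≤ (2 * B) ^ p :=
        Real.rpow_le_rpow (by linarith) (by linarith) hp
    _ = 2 ^ p * B ^ p := Real.mul_rpow (by norm_num) hB
    _ ≤ 2 ^ p * (A ^ p + B ^ p) := by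
        have := Real.rpow_nonneg hA p; nlinarith
  · calc (A + B) ^ p ≤ (2 * A) ^ p :=
        Real.rpow_le_rpow (by linarith) (by linarith) hp
    _ = 2 ^ p * A ^ p := Real.mul_rpow (by norm_num) hA
    _ ≤ 2 ^ p * (A ^ p + B ^ p) := by
        have := Real.rpow_nonneg hB p; nlinarith

set_option maxHeartbeats 1000000 in
/-- Gronwall-type inequality with a sublinear nonlinearity: if
`y' ≤ β(t) + κ y^(1-r)` on `(0,∞)`, then `y(t) ≤ C (y(0) + ∫₀ᵗ β + t^(1/r))`,
where `C` depends only on `κ` and `r`. -/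
theorem gronwall_type_sublinear (κ r : ℝ) (hκ : 0 < κ) (hr0 : 0 < r) (hr1 : r < 1) :
    ∃ C : ℝ, 0 < C ∧
      ∀ β y : ℝ → ℝ,
        ContinuousOn β (Ici (0 : ℝ)) → (∀ t ≥ (0 : ℝ), 0 ≤ β t) →
        Differentiable ℝ y → (∀ t ≥ (0 : ℝ), 0 ≤ y t) →
        (∀ t > (0 : ℝ), deriv y t ≤ β t + κ * y t ^ (1 - r)) →
        ∀ t > (0 : ℝ),
          y t ≤ C * (y 0 + (∫ s in Ioc (0 : ℝ) t, β s) + t ^ (1 / r)) := by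
  have hp : (0:ℝ) < 1 / r := by positivity
  set p : ℝ := 1 / r with hpdef
  have hrp : r * p = 1 := by rw [hpdef, mul_one_div, div_self hr0.ne']
  have h2rpos : (0:ℝ) < (2:ℝ) ^ r + r := by
    have := Real.rpow_pos_of_pos (by norm_num : (0:ℝ) < 2) r; linarith
  have hC1 : (0:ℝ) < 2 ^ p * ((2:ℝ) ^ r + r) ^ p :=
    mul_pos (Real.rpow_pos_of_pos two_pos p) (Real.rpow_pos_of_pos h2rpos p)
  have hC2 : (0:ℝ) < 2 ^ p * (r * κ) ^ p :=
    mul_pos (Real.rpow_pos_of_pos two_pos p) (Real.rpow_pos_of_pos (mul_pos hr0 hκ) p)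
  refine ⟨2 ^ p * ((2:ℝ) ^ r + r) ^ p + 2 ^ p * (r * κ) ^ p, by linarith, ?_⟩
  intro β y hβc hβ0 hy hy0 hineq t ht
  set F : ℝ := ∫ s in Ioc (0:ℝ) t, β s with hFdef
  have hF0 : 0 ≤ F := setIntegral_nonneg measurableSet_Ioc fun x hx => hβ0 x hx.1.le
  have hy00 : 0 ≤ y 0 := hy0 0 le_rfl
  have htp : 0 ≤ t ^ p := Real.rpow_nonneg ht.le p
  -- it suffices to prove the bound up to an arbitrary positive δ'
  refine le_of_forall_pos_le_add fun δ' hδ' => ?_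
  set δ : ℝ := δ' / (2 ^ p * ((2:ℝ) ^ r + r) ^ p) with hδdef
  have hδ : 0 < δ := by positivity
  set ε : ℝ := y 0 + F + δ with hεdef
  have hε : 0 < ε := by positivity
  -- the primitive of β
  set G : ℝ → ℝ := fun s => ∫ x in Ioc (0:ℝ) s, β x with hGdef
  have hβInt : IntegrableOn β (Icc 0 t) := (hβc.mono Icc_subset_Ici_self).integrableOn_Icc
  have hGcont : ContinuousOn G (Icc 0 t) := intervalIntegral.continuousOn_primitive hβInt
  have hGderiv : ∀ s ∈ Ioo (0:ℝ) t, HasDerivAt G (β s) s := by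
    intro s hs
    have hInt : IntervalIntegrable β volume 0 s :=
      (hβc.mono (by rw [uIcc_of_le hs.1.le]; exact Icc_subset_Ici_self)).intervalIntegrable
    have hca : ContinuousAt β s := hβc.continuousAt (Ici_mem_nhds hs.1)
    have hms : StronglyMeasurableAtFilter β (nhds s) :=
      ⟨Ici 0, Ici_mem_nhds hs.1, hβc.aestronglyMeasurable measurableSet_Ici⟩
    have h1 : HasDerivAt (fun x => ∫ u in (0:ℝ)..x, β u) (β s) s :=
      intervalIntegral.integral_hasDerivAt_right hInt hms hca
    apply h1.congr_of_eventuallyEq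
    filter_upwards [eventually_gt_nhds hs.1] with x hx
    exact (intervalIntegral.integral_of_le hx.le).symm
  -- the modified unknown u = (y + ε)^r
  set u : ℝ → ℝ := fun s => (y s + ε) ^ r with hudef
  have hypos : ∀ s ≥ (0:ℝ), 0 < y s + ε := fun s hs => by have := hy0 s hs; linarith
  have huderiv : ∀ s ≥ (0:ℝ), HasDerivAt u (deriv y s * r * (y s + ε) ^ (r - 1)) s := by
    intro s hs
    exact (((hy s).hasDerivAt).add_const ε).rpow_const (Or.inl (hypos s hs).ne')
  have hucont : Continuous u :=
    (hy.continuous.add continuous_const).rpow_const fun x => Or.inr hr0.le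
  set h : ℝ → ℝ := fun s => r * ε ^ (r - 1) * G s + r * κ * s - u s with hhdef
  have hkey : ∀ s ∈ Ioo (0:ℝ) t,
      HasDerivAt h (r * ε ^ (r - 1) * β s + r * κ - deriv y s * r * (y s + ε) ^ (r - 1)) s := by
    intro s hs
    have h1 := (hGderiv s hs).const_mul (r * ε ^ (r - 1))
    have h2 : HasDerivAt (fun x : ℝ => r * κ * x) (r * κ) s := by
      simpa using (hasDerivAt_id s).const_mul (r * κ)
    exact (h1.add h2).sub (huderiv s hs.1.le)
  have hderiv_nonneg : ∀ s ∈ Ioo (0:ℝ) t, 0 ≤ deriv h s := by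
    intro s hs
    rw [(hkey s hs).deriv]
    have hyε : 0 < y s + ε := hypos s hs.1.le
    have hq : 0 < (y s + ε) ^ (r - 1) := Real.rpow_pos_of_pos hyε _
    have hyd := hineq s hs.1
    have hβs := hβ0 s hs.1.le
    have hmul : deriv y s * r * (y s + ε) ^ (r - 1)
        ≤ (β s + κ * y s ^ (1 - r)) * r * (y s + ε) ^ (r - 1) := by
      have hpos : 0 ≤ r * (y s + ε) ^ (r - 1) := by positivity
      nlinarith
    have hb1 : (y s + ε) ^ (r - 1) ≤ ε ^ (r - 1) :=
      Real.rpow_le_rpow_of_nonpos hε (by have := hy0 s hs.1.le; linarith) (by linarith)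
    have hb2 : y s ^ (1 - r) * (y s + ε) ^ (r - 1) ≤ 1 := by
      have h1 : y s ^ (1 - r) ≤ (y s + ε) ^ (1 - r) :=
        Real.rpow_le_rpow (hy0 s hs.1.le) (by linarith) (by linarith)
      have h2 : (y s + ε) ^ (1 - r) * (y s + ε) ^ (r - 1) = 1 := by
        rw [← Real.rpow_add hyε]; norm_num
      calc y s ^ (1 - r) * (y s + ε) ^ (r - 1)
          ≤ (y s + ε) ^ (1 - r) * (y s + ε) ^ (r - 1) :=
            mul_le_mul_of_nonneg_right h1 hq.le
        _ = 1 := h2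
    have e1 : β s * ((y s + ε) ^ (r - 1)) ≤ β s * ε ^ (r - 1) :=
      mul_le_mul_of_nonneg_left hb1 hβs
    have e2 : κ * (y s ^ (1 - r) * (y s + ε) ^ (r - 1)) ≤ κ * 1 :=
      mul_le_mul_of_nonneg_left hb2 hκ.le
    nlinarith [hr0.le, hq.le]
  have hmono : MonotoneOn h (Icc 0 t) := by
    apply monotoneOn_of_deriv_nonneg (convex_Icc 0 t)
    · exact ((continuousOn_const.mul hGcont).add
        (continuous_const.mul continuous_id).continuousOn).sub hucont.continuousOn
    · intro s hs
      rw [interior_Icc] at hs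
      exact (hkey s hs).differentiableAt.differentiableWithinAt
    · intro s hs
      rw [interior_Icc] at hs
      exact hderiv_nonneg s hs
  have hle := hmono (left_mem_Icc.2 ht.le) (right_mem_Icc.2 ht.le) ht.le
  have hG0 : G 0 = 0 := by simp [hGdef]
  have hGt : G t = F := rfl
  have hut : u t ≤ u 0 + r * ε ^ (r - 1) * F + r * κ * t := by
    simp only [hhdef, hG0, hGt, mul_zero] at hle
    linarith
  -- bound the right-hand side
  have hu0 : u 0 ≤ 2 ^ r * ε ^ r := by
    have hle2 : y 0 + ε ≤ 2 * ε := by rw [hεdef]; linarith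
    calc u 0 = (y 0 + ε) ^ r := rfl
      _ ≤ (2 * ε) ^ r := Real.rpow_le_rpow (by linarith) hle2 hr0.le
      _ = 2 ^ r * ε ^ r := Real.mul_rpow (by norm_num) hε.le
  have hεr : ε ^ (r - 1) * ε = ε ^ r := by
    have h2 : ε ^ (r - 1) * ε ^ (1:ℝ) = ε ^ ((r - 1) + 1) := (Real.rpow_add hε _ _).symm
    rw [Real.rpow_one] at h2
    rw [h2]; norm_num
  have hFε : r * ε ^ (r - 1) * F ≤ r * ε ^ r := by
    have hFle : F ≤ ε := by rw [hεdef]; linarith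
    have h3 : ε ^ (r - 1) * F ≤ ε ^ (r - 1) * ε :=
      mul_le_mul_of_nonneg_left hFle (Real.rpow_nonneg hε.le _)
    rw [hεr] at h3
    calc r * ε ^ (r - 1) * F = r * (ε ^ (r - 1) * F) := by ring
      _ ≤ r * ε ^ r := mul_le_mul_of_nonneg_left h3 hr0.le
  have hut2 : u t ≤ ((2:ℝ) ^ r + r) * ε ^ r + r * κ * t := by
    have : r * ε ^ r + 2 ^ r * ε ^ r = (2 ^ r + r) * ε ^ r := by ring
    linarith
  -- invert the power
  have hytε : y t + ε = (u t) ^ p := by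
    rw [hudef]
    rw [← Real.rpow_mul (by have := hy0 t ht.le; linarith : (0:ℝ) ≤ y t + ε), hrp, Real.rpow_one]
  have hu_nonneg : 0 ≤ u t := Real.rpow_nonneg (by have := hy0 t ht.le; linarith) r
  have hyt : y t ≤ (((2:ℝ) ^ r + r) * ε ^ r + r * κ * t) ^ p := by
    calc y t ≤ y t + ε := by linarith
      _ = u t ^ p := hytε
      _ ≤ (((2:ℝ) ^ r + r) * ε ^ r + r * κ * t) ^ p :=
          Real.rpow_le_rpow hu_nonneg hut2 hp.le
  have h2r' : (0:ℝ) ≤ (2:ℝ) ^ r + r :=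
    add_nonneg (Real.rpow_pos_of_pos two_pos r).le hr0.le
  have hsplit : (((2:ℝ) ^ r + r) * ε ^ r + r * κ * t) ^ p
      ≤ 2 ^ p * ((((2:ℝ) ^ r + r) * ε ^ r) ^ p + (r * κ * t) ^ p) :=
    rpow_add_le_aux _ _ p (mul_nonneg h2r' (Real.rpow_nonneg hε.le r))
      (by positivity) hp.le
  have h2r : (0:ℝ) ≤ (2:ℝ) ^ r + r :=
    add_nonneg (Real.rpow_pos_of_pos two_pos r).le hr0.le
  have hA : (((2:ℝ) ^ r + r) * ε ^ r) ^ p = ((2:ℝ) ^ r + r) ^ p * ε := by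
    rw [Real.mul_rpow h2r (Real.rpow_nonneg hε.le r)]
    congr 1
    rw [← Real.rpow_mul hε.le, hrp, Real.rpow_one]
  have hB : (r * κ * t) ^ p = (r * κ) ^ p * t ^ p :=
    Real.mul_rpow (by positivity) ht.le
  have hfin : y t ≤ 2 ^ p * ((2:ℝ) ^ r + r) ^ p * (y 0 + F + δ)
      + 2 ^ p * (r * κ) ^ p * t ^ p := by
    rw [hA, hB] at hsplit
    calc y t ≤ _ := hyt
      _ ≤ 2 ^ p * (((2:ℝ) ^ r + r) ^ p * ε + (r * κ) ^ p * t ^ p) := hsplit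
      _ = 2 ^ p * ((2:ℝ) ^ r + r) ^ p * ε + 2 ^ p * (r * κ) ^ p * t ^ p := by ring
      _ = _ := by rw [hεdef]
  have hδcancel : 2 ^ p * ((2:ℝ) ^ r + r) ^ p * δ = δ' := by
    rw [hδdef, mul_div_cancel₀ _ hC1.ne']
  nlinarith [mul_nonneg hC1.le (add_nonneg hy00 hF0), mul_nonneg hC2.le (add_nonneg hy00 hF0),
    mul_nonneg hC1.le htp, mul_nonneg hC2.le htp]
end

section
/- Let c > 0 be a real number and let p : N → R be a sequence with c/2 < p_0 < c and such that p_{n+1} = c * p_n / (2 * (c - p_n)) whenever p_n < c. Then there exists n in N with p_n >= c. -/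
/-- Bootstrap exponent recursion: if `c/2 < p 0 < c` and
`p (n+1) = c * p n / (2 * (c - p n))` whenever `p n < c`, then the sequence
reaches or exceeds `c` after finitely many steps. -/
theorem bootstrap_exponents_reach_c (c : ℝ) (hc : 0 < c) (p : ℕ → ℝ)
    (h0 : c / 2 < p 0) (h0' : p 0 < c)
    (hrec : ∀ n : ℕ, p n < c → p (n + 1) = c * p n / (2 * (c - p n))) :
    ∃ n : ℕ, c ≤ p n := by
  by_contra hcon
  push_neg at hcon
  have hd0 : 0 < p 0 - c / 2 := by linarith
  have key : ∀ n : ℕ, c / 2 + 2 ^ n * (p 0 - c / 2) ≤ p n := by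
    intro n
    induction n with
    | zero => simp
    | succ n ih =>
      have hpn : p n < c := hcon n
      have hgap : 0 < c - p n := by linarith
      have hhalf : c / 2 < p n := by
        have : (1 : ℝ) ≤ 2 ^ n := one_le_pow₀ (by norm_num)
        nlinarith [mul_le_mul_of_nonneg_right this (le_of_lt hd0)]
      have hrw := hrec n hpn
      have h2 : (0:ℝ) < 2 * (c - p n) := by linarith
      -- p (n+1) - c/2 = c (2 p n - c) / (2 (c - p n))
      have hfac : c - p n ≤ c / 2 := by linarith
      have hkey : 2 * (p n - c / 2) ≤ p (n + 1) - c / 2 := by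
        rw [hrw]
        rw [div_sub' (ne_of_gt h2), le_div_iff₀ h2]
        nlinarith
      have hpow : 2 ^ n * (p 0 - c / 2) ≤ p n - c / 2 := by linarith
      calc c / 2 + 2 ^ (n + 1) * (p 0 - c / 2)
          = c / 2 + 2 * (2 ^ n * (p 0 - c / 2)) := by ring
        _ ≤ c / 2 + 2 * (p n - c / 2) := by linarith
        _ ≤ p (n + 1) := by linarith
  obtain ⟨n, hn⟩ := pow_unbounded_of_one_lt (R := ℝ) (c / (p 0 - c / 2)) (by norm_num : (1:ℝ) < 2)
  have : c < 2 ^ n * (p 0 - c / 2) := by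
    rw [div_lt_iff₀ hd0] at hn
    linarith
  have := key n
  have := hcon n
  linarith
end
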